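/- arXiv:1702.02599 — 6 statements merged into one kernel-verified Lean document; each statement's English description precedes it below -/
import Mathlib

section
/- Let (ν_j) be a sequence of finite Borel measures on ℝ all supported in a compact interval [0,C], converging weakly to a finite measure ν, with ν_j(ℝ) ≤ V for all j. Suppose there is B > 0 such that exp(∫_{ℝ∖{0}} ln|t| dν_j(t)) ≥ B for all j. Then exp(∫_{ℝ∖{0}} ln|t| dν(t)) ≥ B and lim_{j→∞} ν_j({0}) = ν({0}). -/
open MeasureTheory Filter

noncomputable def mkB (f : ℝ → ℝ) (hf : Continuous f) (lo hi : ℝ)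
    (h1 : ∀ x, lo ≤ f x) (h2 : ∀ x, f x ≤ hi) : BoundedContinuousFunction ℝ ℝ :=
  ⟨⟨f, hf⟩, ⟨hi - lo, fun x y => by
    rw [Real.dist_eq]
    exact abs_sub_le_iff.2 ⟨sub_le_sub (h2 x) (h1 y), sub_le_sub (h2 y) (h1 x)⟩⟩⟩

@[simp] lemma mkB_apply (f : ℝ → ℝ) (hf : Continuous f) (lo hi : ℝ)
    (h1 : ∀ x, lo ≤ f x) (h2 : ∀ x, f x ≤ hi) (t : ℝ) : mkB f hf lo hi h1 h2 t = f t := rfl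

noncomputable def gbcf (M ε : ℝ) (hM : 0 ≤ M) (hε : 0 < ε) (hε1 : ε ≤ 1) :
    BoundedContinuousFunction ℝ ℝ :=
  mkB (fun t => min M (Real.log (max |t| ε)))
    (by
      refine continuous_const.min ?_
      rw [continuous_iff_continuousAt]
      intro x
      have hpos : 0 < max |x| ε := lt_of_lt_of_le hε (le_max_right _ _)
      have hc : ContinuousAt (fun t : ℝ => max |t| ε) x :=
        (continuous_abs.max continuous_const).continuousAt
      exact hc.log (ne_of_gt hpos))
    (Real.log ε) M
    (fun x => le_min (le_trans (Real.log_nonpos hε.le hε1) hM)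
      (Real.log_le_log hε (le_max_right _ _)))
    (fun x => min_le_left _ _)

@[simp] lemma gbcf_apply (M ε : ℝ) (hM : 0 ≤ M) (hε : 0 < ε) (hε1 : ε ≤ 1) (t : ℝ) :
    gbcf M ε hM hε hε1 t = min M (Real.log (max |t| ε)) := rfl

noncomputable def bbcf (r : ℝ) (hr : 0 < r) : BoundedContinuousFunction ℝ ℝ :=
  mkB (fun t => max 0 (1 - |t| / r))
    (continuous_const.max (continuous_const.sub (continuous_abs.div_const r)))
    0 1 (fun x => le_max_left _ _)
    (fun x => max_le zero_le_one (by
      have h := div_nonneg (abs_nonneg x) hr.le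
      linarith))

@[simp] lemma bbcf_apply (r : ℝ) (hr : 0 < r) (t : ℝ) : bbcf r hr t = max 0 (1 - |t| / r) := rfl

noncomputable def pbcf (c r : ℝ) : BoundedContinuousFunction ℝ ℝ :=
  mkB (fun t => max 0 (min 1 (max (-t / r) ((t - c) / r))))
    (continuous_const.max (continuous_const.min
      ((continuous_neg.div_const r).max ((continuous_id.sub continuous_const).div_const r))))
    0 1 (fun x => le_max_left _ _)
    (fun x => max_le zero_le_one (min_le_left _ _))

@[simp] lemma pbcf_apply (c r : ℝ) (t : ℝ) :
    pbcf c r t = max 0 (min 1 (max (-t / r) ((t - c) / r))) := rfl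

lemma int_sing (m : Measure ℝ) (f : ℝ → ℝ) :
    ∫ t in ({0} : Set ℝ), f t ∂m = f 0 * (m {0}).toReal := by
  rw [Measure.restrict_singleton, integral_smul_measure, integral_dirac, smul_eq_mul, mul_comm]

lemma bcf_split (m : Measure ℝ) [IsFiniteMeasure m] (G : BoundedContinuousFunction ℝ ℝ) :
    ∫ t, G t ∂m = G 0 * (m {0}).toReal + ∫ t in ({0}ᶜ : Set ℝ), G t ∂m := by
  rw [← integral_add_compl (measurableSet_singleton (0:ℝ)) (G.integrable m), int_sing]

theorem stmt6 (μ : ℕ → Measure ℝ) (ν : Measure ℝ)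
    [∀ j, IsFiniteMeasure (μ j)] [IsFiniteMeasure ν]
    (C : ℝ) (hC : 0 < C) (hsupp : ∀ j, μ j (Set.Icc 0 C)ᶜ = 0)
    (V : ℝ) (hV : ∀ j, ((μ j) Set.univ).toReal ≤ V)
    (hweak : ∀ f : BoundedContinuousFunction ℝ ℝ,
      Tendsto (fun j => ∫ t, f t ∂(μ j)) atTop (nhds (∫ t, f t ∂ν)))
    (B : ℝ) (hB : 0 < B)
    (hint : ∀ j, IntegrableOn (fun t => Real.log |t|) {0}ᶜ (μ j))
    (hdet : ∀ j, B ≤ Real.exp (∫ t in ({0}ᶜ : Set ℝ), Real.log |t| ∂(μ j))) :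
    (IntegrableOn (fun t => Real.log |t|) {0}ᶜ ν ∧
      B ≤ Real.exp (∫ t in ({0}ᶜ : Set ℝ), Real.log |t| ∂ν)) ∧
    Tendsto (fun j => ((μ j) {0}).toReal) atTop (nhds ((ν {0}).toReal)) := by
  have hM : (0:ℝ) ≤ max (Real.log C) 0 := le_max_right _ _
  set M := max (Real.log C) 0 with hMdef
  -- a.e. support of μ j
  have hsupp_ae : ∀ j, ∀ᵐ t ∂(μ j), t ∈ Set.Icc 0 C := by
    intro j
    rw [ae_iff]
    exact hsupp j
  -- value of gbcf at 0
  have hG0 : ∀ (ε : ℝ) (hε : 0 < ε) (hε1 : ε ≤ 1), gbcf M ε hM hε hε1 0 = Real.log ε := by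
    intro ε hε hε1
    rw [gbcf_apply, abs_zero, max_eq_right hε.le,
      min_eq_right (le_trans (Real.log_nonpos hε.le hε1) hM)]
  -- support of ν
  have hνsupp : ν (Set.Icc 0 C)ᶜ = 0 := by
    have key : ∀ n : ℕ, ν (Set.Icc (-(1/((n:ℝ)+1))) (C + 1/((n:ℝ)+1)))ᶜ = 0 := by
      intro n
      have hr : 0 < 1/((n:ℝ)+1) := by positivity
      set φ := pbcf C (1/((n:ℝ)+1)) with hφ
      have hφ0 : ∀ t ∈ Set.Icc (0:ℝ) C, φ t = 0 := by
        intro t ht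
        rw [hφ, pbcf_apply]
        apply max_eq_left
        have h1 : -t / (1/((n:ℝ)+1)) ≤ 0 :=
          div_nonpos_of_nonpos_of_nonneg (neg_nonpos.2 ht.1) hr.le
        have h2 : (t - C) / (1/((n:ℝ)+1)) ≤ 0 :=
          div_nonpos_of_nonpos_of_nonneg (by linarith [ht.2]) hr.le
        calc min 1 (max (-t / (1/((n:ℝ)+1))) ((t - C) / (1/((n:ℝ)+1))))
            ≤ max (-t / (1/((n:ℝ)+1))) ((t - C) / (1/((n:ℝ)+1))) := min_le_right _ _
          _ ≤ 0 := max_le h1 h2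
      have hμ0 : ∀ j, ∫ t, φ t ∂(μ j) = 0 := by
        intro j
        apply integral_eq_zero_of_ae
        filter_upwards [hsupp_ae j] with t ht
        exact hφ0 t ht
      have hν0 : ∫ t, φ t ∂ν = 0 := by
        have h := hweak φ
        simp only [hμ0] at h
        exact tendsto_nhds_unique h tendsto_const_nhds
      have hφ1 : ∀ t ∈ (Set.Icc (-(1/((n:ℝ)+1))) (C + 1/((n:ℝ)+1)))ᶜ, φ t = 1 := by
        intro t ht
        simp only [Set.mem_compl_iff, Set.mem_Icc, not_and_or, not_le] at ht
        rw [hφ, pbcf_apply]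
        have h1 : (1:ℝ) ≤ max (-t / (1/((n:ℝ)+1))) ((t - C) / (1/((n:ℝ)+1))) := by
          rcases ht with h | h
          · exact le_max_of_le_left ((one_le_div hr).2 (by linarith))
          · exact le_max_of_le_right ((one_le_div hr).2 (by linarith))
        rw [min_eq_left h1, max_eq_right zero_le_one]
      have e1 : ∫ t in (Set.Icc (-(1/((n:ℝ)+1))) (C + 1/((n:ℝ)+1)))ᶜ, φ t ∂ν
          = (ν (Set.Icc (-(1/((n:ℝ)+1))) (C + 1/((n:ℝ)+1)))ᶜ).toReal := by
        rw [setIntegral_congr_fun measurableSet_Icc.compl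
          (fun t ht => hφ1 t ht), setIntegral_const, smul_eq_mul, mul_one, measureReal_def]
      have e2 : ∫ t in (Set.Icc (-(1/((n:ℝ)+1))) (C + 1/((n:ℝ)+1)))ᶜ, φ t ∂ν
          ≤ ∫ t, φ t ∂ν := by
        apply setIntegral_le_integral (φ.integrable ν)
        apply ae_of_all
        intro t
        rw [hφ, pbcf_apply]
        exact le_max_left _ _
      rw [e1, hν0] at e2
      have h0 : (ν (Set.Icc (-(1/((n:ℝ)+1))) (C + 1/((n:ℝ)+1)))ᶜ).toReal = 0 :=
        le_antisymm e2 ENNReal.toReal_nonneg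
      exact ((ENNReal.toReal_eq_zero_iff _).1 h0).resolve_right (measure_ne_top _ _)
    apply measure_mono_null ?_ (measure_iUnion_null key)
    intro x hx
    simp only [Set.mem_compl_iff, Set.mem_Icc, not_and_or, not_le] at hx
    rcases hx with h | h
    · obtain ⟨n, hn⟩ := exists_nat_one_div_lt (neg_pos.2 h)
      refine Set.mem_iUnion.2 ⟨n, ?_⟩
      simp only [Set.mem_compl_iff, Set.mem_Icc, not_and_or, not_le]
      left; linarith
    · obtain ⟨n, hn⟩ := exists_nat_one_div_lt (by linarith : (0:ℝ) < x - C)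
      refine Set.mem_iUnion.2 ⟨n, ?_⟩
      simp only [Set.mem_compl_iff, Set.mem_Icc, not_and_or, not_le]
      right; linarith
  have hν_ae : ∀ᵐ t ∂ν, t ∈ Set.Icc 0 C := by
    rw [ae_iff]
    exact hνsupp
  -- eventual upper bound on atoms at 0
  have hup : ∀ δ : ℝ, 0 < δ →
      ∀ᶠ j in atTop, ((μ j) {0}).toReal ≤ (ν {0}).toReal + δ := by
    intro δ hδ
    have hmeas : ∀ n : ℕ, NullMeasurableSet (Set.Icc (-(1/((n:ℝ)+1))) (1/((n:ℝ)+1))) ν :=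
      fun n => measurableSet_Icc.nullMeasurableSet
    have hanti : Antitone fun n : ℕ => Set.Icc (-(1/((n:ℝ)+1))) (1/((n:ℝ)+1)) := by
      intro m n hmn
      have h1 : 1/((n:ℝ)+1) ≤ 1/((m:ℝ)+1) :=
        one_div_le_one_div_of_le (by positivity) (by exact_mod_cast Nat.succ_le_succ hmn)
      exact Set.Icc_subset_Icc (neg_le_neg h1) h1
    have hiInter : (⋂ n : ℕ, Set.Icc (-(1/((n:ℝ)+1))) (1/((n:ℝ)+1))) = {0} := by
      ext x
      simp only [Set.mem_iInter, Set.mem_Icc, Set.mem_singleton_iff]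
      constructor
      · intro hx
        by_contra hx0
        obtain ⟨n, hn⟩ := exists_nat_one_div_lt (abs_pos.2 hx0)
        have h1 := hx n
        have habs : |x| ≤ 1/((n:ℝ)+1) := abs_le.2 ⟨h1.1, h1.2⟩
        linarith
      · rintro rfl
        intro n
        have h1 : (0:ℝ) < 1/((n:ℝ)+1) := by positivity
        constructor <;> linarith
    have htend := tendsto_measure_iInter_atTop (μ := ν)
      (s := fun n : ℕ => Set.Icc (-(1/((n:ℝ)+1))) (1/((n:ℝ)+1))) hmeas hanti
      ⟨0, measure_ne_top _ _⟩
    rw [hiInter] at htend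
    have htendR := (ENNReal.tendsto_toReal (measure_ne_top ν {0})).comp htend
    have hev : ∀ᶠ n : ℕ in atTop,
        (ν (Set.Icc (-(1/((n:ℝ)+1))) (1/((n:ℝ)+1)))).toReal < (ν {0}).toReal + δ/2 :=
      htendR.eventually_lt_const (by linarith)
    obtain ⟨n, hn⟩ := hev.exists
    have hr : 0 < 1/((n:ℝ)+1) := by positivity
    set f := bbcf (1/((n:ℝ)+1)) hr with hf
    have h1 : ∀ j, ((μ j) {0}).toReal ≤ ∫ t, f t ∂(μ j) := by
      intro j
      have h0 : f 0 = 1 := by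
        rw [hf, bbcf_apply, abs_zero, zero_div, sub_zero, max_eq_right zero_le_one]
      calc ((μ j) {0}).toReal = f 0 * ((μ j) {0}).toReal := by rw [h0, one_mul]
        _ = ∫ t in ({0} : Set ℝ), f t ∂(μ j) := (int_sing _ _).symm
        _ ≤ ∫ t, f t ∂(μ j) := setIntegral_le_integral (f.integrable _)
            (ae_of_all _ fun t => by rw [hf, bbcf_apply]; exact le_max_left _ _)
    have h2 : ∫ t, f t ∂ν ≤ (ν (Set.Icc (-(1/((n:ℝ)+1))) (1/((n:ℝ)+1)))).toReal := by
      have hsplit := integral_add_compl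
        (measurableSet_Icc (a := -(1/((n:ℝ)+1))) (b := 1/((n:ℝ)+1))) (f.integrable ν)
      have hzero : ∫ t in (Set.Icc (-(1/((n:ℝ)+1))) (1/((n:ℝ)+1)))ᶜ, f t ∂ν = 0 := by
        rw [setIntegral_congr_fun measurableSet_Icc.compl (g := fun _ => (0:ℝ)) ?_,
          integral_zero]
        intro t ht
        simp only [Set.mem_compl_iff, Set.mem_Icc, not_and_or, not_le] at ht
        have habs : 1/((n:ℝ)+1) ≤ |t| := by
          rcases ht with h | h
          · rw [abs_of_neg (by linarith)]; linarith
          · rw [abs_of_pos (by linarith)]; linarith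
        rw [hf, bbcf_apply]
        apply max_eq_left
        have h3 := (one_le_div hr).2 habs
        linarith
      have hone : ∫ t in Set.Icc (-(1/((n:ℝ)+1))) (1/((n:ℝ)+1)), f t ∂ν
          ≤ (ν (Set.Icc (-(1/((n:ℝ)+1))) (1/((n:ℝ)+1)))).toReal := by
        have h4 := setIntegral_mono_on (s := Set.Icc (-(1/((n:ℝ)+1))) (1/((n:ℝ)+1)))
          (g := fun _ => (1:ℝ)) ((f.integrable ν).integrableOn)
          (integrableOn_const) measurableSet_Icc
          (fun t _ => by
            rw [hf, bbcf_apply]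
            have h5 := div_nonneg (abs_nonneg t) hr.le
            exact max_le zero_le_one (by linarith))
        rwa [setIntegral_const, smul_eq_mul, mul_one] at h4
      linarith
    have hev2 : ∀ᶠ j in atTop, ∫ t, f t ∂(μ j) < ∫ t, f t ∂ν + δ/2 :=
      (hweak f).eventually_lt_const (by linarith)
    filter_upwards [hev2] with j hj
    have h6 := h1 j
    linarith
  -- lower bound for integrals of gbcf against μ j
  have hlow : ∀ (ε : ℝ) (hε : 0 < ε) (hε1 : ε ≤ 1) (j : ℕ),
      Real.log B + Real.log ε * ((μ j) {0}).toReal ≤ ∫ t, (gbcf M ε hM hε hε1) t ∂(μ j) := by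
    intro ε hε hε1 j
    have hmono : ∫ t in ({0}ᶜ : Set ℝ), Real.log |t| ∂(μ j)
        ≤ ∫ t in ({0}ᶜ : Set ℝ), (gbcf M ε hM hε hε1) t ∂(μ j) := by
      apply integral_mono_ae (hint j) (((gbcf M ε hM hε hε1).integrable (μ j)).integrableOn)
      rw [EventuallyLE, ae_restrict_iff' (measurableSet_singleton (0:ℝ)).compl]
      filter_upwards [hsupp_ae j] with t ht hne
      have hne' : t ≠ 0 := hne
      have ht0 : 0 < t := lt_of_le_of_ne ht.1 (Ne.symm hne')
      rw [gbcf_apply, abs_of_pos ht0]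
      refine le_min ?_ ?_
      · exact le_trans (Real.log_le_log ht0 ht.2) (le_max_left _ _)
      · exact Real.log_le_log ht0 (le_max_left _ _)
    have h3 := (Real.log_le_iff_le_exp hB).2 (hdet j)
    rw [bcf_split (μ j) (gbcf M ε hM hε hε1), hG0 ε hε hε1]
    linarith
  -- lower bound for the integral of gbcf against ν
  have hJ : ∀ (ε : ℝ) (hε : 0 < ε) (hε1 : ε < 1),
      Real.log B + Real.log ε * (ν {0}).toReal ≤ ∫ t, (gbcf M ε hM hε hε1.le) t ∂ν := by
    intro ε hε hε1
    have hlogneg : Real.log ε < 0 := Real.log_neg hε hε1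
    refine le_of_forall_pos_le_add ?_
    intro δ hδ
    have hδ' : 0 < δ / (-Real.log ε) := div_pos hδ (by linarith)
    have hev2 : ∀ᶠ j in atTop,
        Real.log B + Real.log ε * (ν {0}).toReal + Real.log ε * (δ / (-Real.log ε))
          ≤ ∫ t, (gbcf M ε hM hε hε1.le) t ∂(μ j) := by
      filter_upwards [hup _ hδ'] with j hj
      have h1 := hlow ε hε hε1.le j
      have h2 : Real.log ε * ((ν {0}).toReal + δ / (-Real.log ε))
          ≤ Real.log ε * ((μ j) {0}).toReal :=
        mul_le_mul_of_nonpos_left hj hlogneg.le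
      have h4 : Real.log ε * ((ν {0}).toReal + δ / (-Real.log ε))
          = Real.log ε * (ν {0}).toReal + Real.log ε * (δ / (-Real.log ε)) := mul_add _ _ _
      linarith
    have hle := ge_of_tendsto (hweak (gbcf M ε hM hε hε1.le)) hev2
    have hne : Real.log ε ≠ 0 := ne_of_lt hlogneg
    have hcanc : Real.log ε * (δ / (-Real.log ε)) = -δ := by
      rw [div_neg, mul_neg, mul_comm, div_mul_cancel₀ _ hne]
    linarith
  -- the restricted integral of gbcf over {0}ᶜ against ν is ≥ log B
  have hJlow : ∀ (ε : ℝ) (hε : 0 < ε) (hε1 : ε < 1),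
      Real.log B ≤ ∫ t in ({0}ᶜ : Set ℝ), (gbcf M ε hM hε hε1.le) t ∂ν := by
    intro ε hε hε1
    have h1 := hJ ε hε hε1
    rw [bcf_split ν (gbcf M ε hM hε hε1.le), hG0 ε hε hε1.le] at h1
    linarith
  -- upper bound for restricted integrals
  have hJhigh : ∀ (ε : ℝ) (hε : 0 < ε) (hε1 : ε ≤ 1),
      ∫ t in ({0}ᶜ : Set ℝ), (gbcf M ε hM hε hε1) t ∂ν ≤ (ν ({0}ᶜ : Set ℝ)).toReal * M := by
    intro ε hε hε1
    have h1 : ∫ t in ({0}ᶜ : Set ℝ), (gbcf M ε hM hε hε1) t ∂ν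
        ≤ ∫ _ in ({0}ᶜ : Set ℝ), M ∂ν := by
      apply integral_mono_ae (((gbcf M ε hM hε hε1).integrable ν).integrableOn)
        (integrableOn_const)
      exact ae_of_all _ fun t => by rw [gbcf_apply]; exact min_le_left _ _
    rwa [setIntegral_const, smul_eq_mul] at h1
  have hlnB_le : Real.log B ≤ (ν ({0}ᶜ : Set ℝ)).toReal * M :=
    le_trans (hJlow (1/2) (by norm_num) (by norm_num)) (hJhigh (1/2) (by norm_num) (by norm_num))
  -- sequence of epsilons
  have hεpos : ∀ n : ℕ, (0:ℝ) < Real.exp (-((n:ℝ)+1)) := fun n => Real.exp_pos _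
  have hεlt : ∀ n : ℕ, Real.exp (-((n:ℝ)+1)) < 1 := by
    intro n
    have h1 : (0:ℝ) ≤ (n:ℝ) := Nat.cast_nonneg n
    calc Real.exp (-((n:ℝ)+1)) < Real.exp 0 := Real.exp_lt_exp.2 (by linarith)
      _ = 1 := Real.exp_zero
  set h' : ℝ → ℝ := fun t => min M (Real.log |t|) with hh'
  set ν' := ν.restrict ({0}ᶜ : Set ℝ) with hν'def
  -- monotone convergence
  have hmeasf : ∀ n : ℕ,
      AEMeasurable (fun t => ENNReal.ofReal (M - gbcf M _ hM (hεpos n) (hεlt n).le t)) ν' :=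
    fun n => (ENNReal.continuous_ofReal.comp
      (continuous_const.sub (gbcf M _ hM (hεpos n) (hεlt n).le).continuous)).measurable.aemeasurable
  have hmonof : ∀ᵐ t ∂ν', Monotone fun n : ℕ =>
      ENNReal.ofReal (M - gbcf M _ hM (hεpos n) (hεlt n).le t) := by
    refine ae_of_all _ fun t n m hnm => ?_
    apply ENNReal.ofReal_le_ofReal
    have h1 : (n:ℝ) ≤ (m:ℝ) := Nat.cast_le.2 hnm
    have h2 : gbcf M _ hM (hεpos m) (hεlt m).le t ≤ gbcf M _ hM (hεpos n) (hεlt n).le t := by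
      simp only [gbcf_apply]
      refine min_le_min le_rfl (Real.log_le_log
        (lt_of_lt_of_le (hεpos m) (le_max_right _ _))
        (max_le_max le_rfl (Real.exp_le_exp.2 (by linarith))))
    linarith
  have htendf : ∀ᵐ t ∂ν', Tendsto
      (fun n : ℕ => ENNReal.ofReal (M - gbcf M _ hM (hεpos n) (hεlt n).le t)) atTop
      (nhds (ENNReal.ofReal (M - h' t))) := by
    have hmem : ∀ᵐ t ∂ν', t ∈ ({0}ᶜ : Set ℝ) :=
      ae_restrict_mem (measurableSet_singleton 0).compl
    filter_upwards [hmem] with t ht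
    have ht' : t ≠ 0 := ht
    have ht0 : 0 < |t| := abs_pos.2 ht'
    apply Tendsto.congr' ?_ tendsto_const_nhds
    obtain ⟨N, hN⟩ := exists_nat_gt (-Real.log |t|)
    refine eventually_atTop.2 ⟨N, fun n hn => ?_⟩
    have hle : Real.exp (-((n:ℝ)+1)) ≤ |t| := by
      have h1 : (N:ℝ) ≤ (n:ℝ) := Nat.cast_le.2 hn
      have h2 : -((n:ℝ)+1) ≤ Real.log |t| := by linarith
      calc Real.exp (-((n:ℝ)+1)) ≤ Real.exp (Real.log |t|) := Real.exp_le_exp.2 h2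
        _ = |t| := Real.exp_log ht0
    rw [hh']
    simp only [gbcf_apply]
    rw [max_eq_left hle]
  have hMCT := lintegral_tendsto_of_tendsto_of_monotone hmeasf hmonof htendf
  -- uniform bound on the lintegrals
  have hbound : ∀ n : ℕ,
      ∫⁻ t, ENNReal.ofReal (M - gbcf M _ hM (hεpos n) (hεlt n).le t) ∂ν'
        ≤ ENNReal.ofReal ((ν ({0}ᶜ : Set ℝ)).toReal * M - Real.log B) := by
    intro n
    have hconst : IntegrableOn (fun _ : ℝ => M) ({0}ᶜ : Set ℝ) ν :=
      integrableOn_const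
    have hGint : Integrable (fun t => (gbcf M _ hM (hεpos n) (hεlt n).le) t) ν' :=
      ((gbcf M _ hM (hεpos n) (hεlt n).le).integrable ν).integrableOn
    have hInt1 : Integrable (fun t => M - gbcf M _ hM (hεpos n) (hεlt n).le t) ν' :=
      hconst.sub hGint
    have hnn : 0 ≤ᵐ[ν'] fun t => M - gbcf M _ hM (hεpos n) (hεlt n).le t :=
      ae_of_all _ fun t => sub_nonneg.2 (by rw [gbcf_apply]; exact min_le_left _ _)
    rw [← ofReal_integral_eq_lintegral_ofReal hInt1 hnn]
    apply ENNReal.ofReal_le_ofReal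
    rw [integral_sub hconst hGint, integral_const, measureReal_restrict_apply_univ, measureReal_def, smul_eq_mul]
    have h1 := hJlow (Real.exp (-((n:ℝ)+1))) (hεpos n) (hεlt n)
    linarith
  have hlim : ∫⁻ t, ENNReal.ofReal (M - h' t) ∂ν'
      ≤ ENNReal.ofReal ((ν ({0}ᶜ : Set ℝ)).toReal * M - Real.log B) :=
    le_of_tendsto hMCT (Eventually.of_forall hbound)
  have hfin : ∫⁻ t, ENNReal.ofReal (M - h' t) ∂ν' < ⊤ :=
    lt_of_le_of_lt hlim ENNReal.ofReal_lt_top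
  have hnn' : 0 ≤ᵐ[ν'] fun t => M - h' t :=
    ae_of_all _ fun t => sub_nonneg.2 (min_le_left _ _)
  have hIntsub : Integrable (fun t => M - h' t) ν' := by
    refine ⟨?_, (hasFiniteIntegral_iff_ofReal hnn').2 hfin⟩
    exact (measurable_const.sub
      (measurable_const.min (Real.measurable_log.comp measurable_abs))).aestronglyMeasurable
  have hconst' : IntegrableOn (fun _ : ℝ => M) ({0}ᶜ : Set ℝ) ν :=
    integrableOn_const
  have hInth' : Integrable h' ν' := by
    have h1 := hconst'.sub hIntsub
    have h2 : ((fun _ : ℝ => M) - fun t => M - h' t) = h' := by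
      funext t
      show M - (M - h' t) = h' t
      ring
    rwa [h2] at h1
  have haeeq : (fun t => Real.log |t|) =ᵐ[ν'] h' := by
    have hmem : ∀ᵐ t ∂ν', t ∈ ({0}ᶜ : Set ℝ) :=
      ae_restrict_mem (measurableSet_singleton 0).compl
    have hicc : ∀ᵐ t ∂ν', t ∈ Set.Icc 0 C := ae_restrict_of_ae hν_ae
    filter_upwards [hmem, hicc] with t ht hticc
    have ht' : t ≠ 0 := ht
    have ht0 : 0 < t := lt_of_le_of_ne hticc.1 (Ne.symm ht')
    have h1 : Real.log |t| ≤ M := by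
      rw [abs_of_pos ht0]
      exact le_trans (Real.log_le_log ht0 hticc.2) (le_max_left _ _)
    rw [hh']
    exact (min_eq_right h1).symm
  have hIntfinal : IntegrableOn (fun t => Real.log |t|) ({0}ᶜ : Set ℝ) ν :=
    hInth'.congr haeeq.symm
  have hval : Real.log B ≤ ∫ t in ({0}ᶜ : Set ℝ), Real.log |t| ∂ν := by
    have e1 : ∫ t in ({0}ᶜ : Set ℝ), Real.log |t| ∂ν = ∫ t, h' t ∂ν' :=
      integral_congr_ae haeeq
    have e2 : ∫ t, (M - h' t) ∂ν' = (ν ({0}ᶜ : Set ℝ)).toReal * M - ∫ t, h' t ∂ν' := by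
      rw [integral_sub hconst' hInth', integral_const, measureReal_restrict_apply_univ, measureReal_def, smul_eq_mul]
    have e3 : ENNReal.ofReal (∫ t, (M - h' t) ∂ν') = ∫⁻ t, ENNReal.ofReal (M - h' t) ∂ν' :=
      ofReal_integral_eq_lintegral_ofReal hIntsub hnn'
    have e4 : ∫ t, (M - h' t) ∂ν' ≤ (ν ({0}ᶜ : Set ℝ)).toReal * M - Real.log B := by
      have h5 : ENNReal.ofReal (∫ t, (M - h' t) ∂ν')
          ≤ ENNReal.ofReal ((ν ({0}ᶜ : Set ℝ)).toReal * M - Real.log B) := by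
        rw [e3]; exact hlim
      exact (ENNReal.ofReal_le_ofReal_iff (by linarith)).1 h5
    linarith
  refine ⟨⟨hIntfinal, (Real.log_le_iff_le_exp hB).1 hval⟩, ?_⟩
  -- convergence of atoms
  rw [Metric.tendsto_atTop]
  intro δ hδ
  set D := (ν ({0}ᶜ : Set ℝ)).toReal * M + 1 - Real.log B with hD
  have hDpos : 0 < D := by rw [hD]; linarith
  set T := (2*D + 1) / δ with hT
  have hTpos : 0 < T := by rw [hT]; positivity
  set ε := Real.exp (-T) with hε
  have hεpos' : 0 < ε := Real.exp_pos _
  have hεlt' : ε < 1 := by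
    rw [hε]
    calc Real.exp (-T) < Real.exp 0 := Real.exp_lt_exp.2 (by linarith)
      _ = 1 := Real.exp_zero
  have hlog : Real.log ε = -T := by rw [hε]; exact Real.log_exp _
  have hlogneg : Real.log ε < 0 := by rw [hlog]; linarith
  have hIval : ∫ t, (gbcf M ε hM hεpos' hεlt'.le) t ∂ν
      ≤ Real.log ε * (ν {0}).toReal + (ν ({0}ᶜ : Set ℝ)).toReal * M := by
    rw [bcf_split ν (gbcf M ε hM hεpos' hεlt'.le), hG0 ε hεpos' hεlt'.le]
    have h1 := hJhigh ε hεpos' hεlt'.le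
    linarith
  have hev3 : ∀ᶠ j in atTop, ∫ t, (gbcf M ε hM hεpos' hεlt'.le) t ∂(μ j)
      < (∫ t, (gbcf M ε hM hεpos' hεlt'.le) t ∂ν) + 1 :=
    (hweak _).eventually_lt_const (by linarith)
  have hev4 : ∀ᶠ j in atTop, (ν {0}).toReal - δ/2 ≤ ((μ j) {0}).toReal := by
    filter_upwards [hev3] with j hj
    have h1 := hlow ε hεpos' hεlt'.le j
    have h2 : Real.log ε * ((μ j) {0}).toReal ≤ Real.log ε * (ν {0}).toReal + D := by
      rw [hD]; linarith
    have h3 : Real.log ε * (((μ j) {0}).toReal - (ν {0}).toReal) ≤ D := by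
      have h4 := mul_sub (Real.log ε) (((μ j) {0}).toReal) ((ν {0}).toReal)
      linarith
    have h4 : D / Real.log ε ≤ ((μ j) {0}).toReal - (ν {0}).toReal := by
      rw [div_le_iff_of_neg hlogneg]
      linarith [mul_comm (Real.log ε) ((((μ j) {0}).toReal - (ν {0}).toReal))]
    have h5 : -(δ/2) ≤ D / Real.log ε := by
      rw [hlog]
      have h6 : D / T < δ/2 := by
        rw [div_lt_iff₀ hTpos]
        have h7 : δ/2 * T = (2*D+1)/2 := by
          rw [hT]; field_simp
        rw [h7]
        linarith
      rw [div_neg]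
      linarith
    linarith
  have hev5 := hup (δ/2) (by linarith)
  have hev6 : ∀ᶠ j in atTop, dist (((μ j) {0}).toReal) ((ν {0}).toReal) < δ := by
    filter_upwards [hev4, hev5] with j h1 h2
    rw [Real.dist_eq, abs_sub_lt_iff]
    constructor <;> linarith
  exact eventually_atTop.1 hev6
end

section
/- Let A be an N×N positive semidefinite matrix over the ring of integers 𝒪_F of a number field F of degree d = [F:ℚ] (via an embedding ι : F → ℂ), acting on a free 𝒪_F-module of rank N. Suppose all archimedean embeddings v of F satisfy ‖A‖_v ≤ c for some c ≥ 1, where ‖A‖_v is the operator norm of A under v. If A ≠ 0, then the product of the nonzero eigenvalues of ι(A) has absolute value at least c^{-(d-1)N}. -/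
open Polynomial Matrix

lemma aux_charpoly_conj {n R : Type*} [Fintype n] [DecidableEq n] [CommRing R]
    (U M V : Matrix n n R) (hUV : U * V = 1) :
    (U * M * V).charpoly = M.charpoly := by
  have hc : charmatrix (U * M * V) =
      (C : R →+* R[X]).mapMatrix U * charmatrix M * (C : R →+* R[X]).mapMatrix V := by
    unfold charmatrix
    have hcomm : ((C : R →+* R[X]).mapMatrix U) * Matrix.scalar n (X : R[X]) =
        Matrix.scalar n (X : R[X]) * ((C : R →+* R[X]).mapMatrix U) :=
      (Matrix.scalar_commute (X : R[X]) (fun r' => Commute.all (X : R[X]) r') _).symm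
    have h1 : (C : R →+* R[X]).mapMatrix U * Matrix.scalar n (X : R[X]) *
        (C : R →+* R[X]).mapMatrix V = Matrix.scalar n (X : R[X]) := by
      rw [hcomm, mul_assoc, (RingHom.map_mul (C : R →+* R[X]).mapMatrix U V).symm, hUV,
        RingHom.map_one, mul_one]
    rw [mul_sub, sub_mul, h1, RingHom.map_mul (C : R →+* R[X]).mapMatrix (U * M) V,
      RingHom.map_mul (C : R →+* R[X]).mapMatrix U M]
  have hdet : ((C : R →+* R[X]).mapMatrix U).det * ((C : R →+* R[X]).mapMatrix V).det = 1 := by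
    rw [← det_mul, (RingHom.map_mul (C : R →+* R[X]).mapMatrix U V).symm, hUV, RingHom.map_one, det_one]
  rw [Matrix.charpoly, hc, det_mul, det_mul, Matrix.charpoly]
  have hre : ((C : R →+* R[X]).mapMatrix U).det * M.charmatrix.det
      * ((C : R →+* R[X]).mapMatrix V).det = M.charmatrix.det
      * (((C : R →+* R[X]).mapMatrix U).det * ((C : R →+* R[X]).mapMatrix V).det) := by ring
  rw [hre, hdet, mul_one]

lemma aux_herm_charpoly {n : ℕ} {B : Matrix (Fin n) (Fin n) ℂ} (hB : B.IsHermitian) :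
    B.charpoly = ∏ i, (X - C ((hB.eigenvalues i : ℂ))) := by
  conv_lhs => rw [hB.spectral_theorem, Unitary.conjStarAlgAut_apply]
  rw [aux_charpoly_conj _ _ _ ((Matrix.mem_unitaryGroup_iff).mp (hB.eigenvectorUnitary).2),
    Matrix.charpoly_of_upperTriangular _ (Matrix.blockTriangular_diagonal _)]
  simp [Function.comp]

lemma aux_coeff_prod {n : ℕ} [DecidablePred fun i : Fin n => True] (l : Fin n → ℂ) (k : ℕ)
    (hk : (∏ i, (X - C (l i))).coeff k ≠ 0)
    (hlow : ∀ j, j < k → (∏ i, (X - C (l i))).coeff j = 0) :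
    (∏ i, (X - C (l i))).coeff k
      = ∏ i ∈ Finset.univ.filter (fun i => l i ≠ 0), (-(l i)) := by
  classical
  set S := Finset.univ.filter (fun i => l i ≠ 0) with hS
  set m := (Finset.univ.filter (fun i : Fin n => l i = 0)).card with hm
  set r := ∏ i ∈ S, (X - C (l i)) with hr
  have hsplit : (∏ i, (X - C (l i))) = X ^ m * r := by
    rw [← Finset.prod_filter_mul_prod_filter_not Finset.univ (fun i => l i = 0)]
    congr 1
    · rw [Finset.prod_congr rfl (fun i hi => by
        simp only [Finset.mem_filter] at hi
        rw [hi.2, map_zero, sub_zero]), Finset.prod_const]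
  have hr0 : r.coeff 0 = ∏ i ∈ S, (-(l i)) := by
    rw [Polynomial.coeff_zero_eq_eval_zero, Polynomial.eval_prod]
    exact Finset.prod_congr rfl fun i _ => by simp
  have hr0ne : r.coeff 0 ≠ 0 := by
    rw [hr0]
    refine Finset.prod_ne_zero_iff.2 fun i hi => ?_
    simp only [hS, Finset.mem_filter] at hi
    exact neg_ne_zero.2 hi.2
  have hcoeff_lt : ∀ j, j < m → (X ^ m * r).coeff j = 0 := by
    intro j hj
    rw [mul_comm, Polynomial.coeff_mul_X_pow', if_neg (by omega)]
  have hcoeff_m : (X ^ m * r).coeff m = r.coeff 0 := by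
    simpa using Polynomial.coeff_X_pow_mul r m 0
  have hkm : k = m := by
    rcases lt_trichotomy k m with h | h | h
    · exfalso; apply hk; rw [hsplit]; exact hcoeff_lt k h
    · exact h
    · exfalso; apply hr0ne; rw [← hcoeff_m, ← hsplit]; exact hlow m h
  rw [hsplit, hkm, hcoeff_m, hr0]

lemma aux_one_le_prod {F : Type*} [Field F] [NumberField F]
    (a : NumberField.RingOfIntegers F) (ha : a ≠ 0) :
    1 ≤ ∏ v : F →+* ℂ,
      ‖v (algebraMap (NumberField.RingOfIntegers F) F a)‖ := by
  set x : F := algebraMap (NumberField.RingOfIntegers F) F a with hx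
  have hxnz : x ≠ 0 := fun h => ha (NumberField.RingOfIntegers.coe_injective
    (by rw [← hx, h, map_zero]))
  have hznz : Algebra.norm ℤ a ≠ 0 := by
    intro h
    have := Algebra.coe_norm_int a
    rw [h] at this
    exact (Algebra.norm_ne_zero_iff.2 hxnz) (by exact_mod_cast this.symm)
  have hq : (1 : ℚ) ≤ |Algebra.norm ℚ x| := by
    rw [show Algebra.norm ℚ x = ((Algebra.norm ℤ a : ℤ) : ℚ) from (Algebra.coe_norm_int a).symm]
    rw [← Int.cast_abs]
    exact_mod_cast Int.one_le_abs hznz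
  have h1 : (algebraMap ℚ ℂ) (Algebra.norm ℚ x) = ∏ σ : F →ₐ[ℚ] ℂ, σ x :=
    Algebra.norm_eq_prod_embeddings ℚ ℂ x
  have h2 := congrArg (‖·‖) h1
  rw [norm_prod] at h2
  have h3 : ‖(algebraMap ℚ ℂ) (Algebra.norm ℚ x)‖ = |(Algebra.norm ℚ x : ℝ)| := by
    rw [eq_ratCast, show ((Algebra.norm ℚ x : ℚ) : ℂ) = (((Algebra.norm ℚ x : ℚ) : ℝ) : ℂ) by
      push_cast; ring, Complex.norm_real, Real.norm_eq_abs]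
  have h4 : ∏ v : F →+* ℂ, ‖v x‖ = ∏ σ : F →ₐ[ℚ] ℂ, ‖σ x‖ :=
    Fintype.prod_equiv (RingHom.equivRatAlgHom F ℂ) (fun v => ‖v x‖)
      (fun σ => ‖σ x‖) fun v => by simp [RingHom.equivRatAlgHom_apply]
  rw [h4, ← h2, h3]
  calc (1:ℝ) ≤ |((Algebra.norm ℚ x : ℚ) : ℝ)| := by exact_mod_cast hq
  _ = |(Algebra.norm ℚ x : ℝ)| := by norm_cast

open scoped ComplexOrder

open scoped Classical in
theorem stmt8 (F : Type*) [Field F] [NumberField F] (N : ℕ)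
    (A : Matrix (Fin N) (Fin N) (NumberField.RingOfIntegers F))
    (c : ℝ) (hc : 1 ≤ c) (ι : F →+* ℂ)
    (hpsd : ∀ v : F →+* ℂ,
      (A.map (fun a => v (algebraMap (NumberField.RingOfIntegers F) F a))).PosSemidef)
    (hnorm : ∀ (v : F →+* ℂ) (i : Fin N), (hpsd v).isHermitian.eigenvalues i ≤ c)
    (hA : A ≠ 0) :
    c ^ (-(((Module.finrank ℚ F : ℝ) - 1) * N)) ≤
      |∏ i ∈ Finset.univ.filter (fun i => (hpsd ι).isHermitian.eigenvalues i ≠ 0),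
          (hpsd ι).isHermitian.eigenvalues i| := by
  have hc0 : (0:ℝ) < c := lt_of_lt_of_le one_pos hc
  set d := Module.finrank ℚ F with hd
  have hd1 : 1 ≤ d := Module.finrank_pos
  set p := A.charpoly with hp
  have hdeg : p.natDegree = N := by
    rw [hp, Matrix.charpoly_natDegree_eq_dim, Fintype.card_fin]
  have hexists : ∃ j, p.coeff j ≠ 0 := ⟨N, by
    rw [← hdeg, (A.charpoly_monic).coeff_natDegree]; exact one_ne_zero⟩
  set k := Nat.find hexists with hk
  have hknz : p.coeff k ≠ 0 := Nat.find_spec hexists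
  have hkmin : ∀ j, j < k → p.coeff j = 0 := fun j hj =>
    of_not_not (Nat.find_min hexists hj)
  have hφinj : ∀ v : F →+* ℂ, Function.Injective (v.comp (algebraMap (NumberField.RingOfIntegers F) F)) :=
    fun v => v.injective.comp NumberField.RingOfIntegers.coe_injective
  have hcp : ∀ v : F →+* ℂ,
      (∏ i, (X - C (((hpsd v).isHermitian.eigenvalues i : ℝ) : ℂ)))
        = Polynomial.map (v.comp (algebraMap (NumberField.RingOfIntegers F) F)) p := by
    intro v
    rw [← Matrix.charpoly_map A (v.comp (algebraMap (NumberField.RingOfIntegers F) F))]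
    exact (aux_herm_charpoly (hpsd v).isHermitian).symm
  have hcoeff : ∀ (v : F →+* ℂ) (j : ℕ),
      (∏ i, (X - C (((hpsd v).isHermitian.eigenvalues i : ℝ) : ℂ))).coeff j
        = (v.comp (algebraMap (NumberField.RingOfIntegers F) F)) (p.coeff j) := by
    intro v j; rw [hcp v, Polynomial.coeff_map]
  set Pv : (F →+* ℂ) → ℝ := fun v =>
    ∏ i ∈ Finset.univ.filter (fun i => (hpsd v).isHermitian.eigenvalues i ≠ 0),
      (hpsd v).isHermitian.eigenvalues i with hPv
  have habs : ∀ v : F →+* ℂ,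
      ‖(v.comp (algebraMap (NumberField.RingOfIntegers F) F)) (p.coeff k)‖ = Pv v := by
    intro v
    have h1 := aux_coeff_prod (fun i => (((hpsd v).isHermitian.eigenvalues i : ℝ) : ℂ)) k
      (by rw [hcoeff]; exact fun h => hknz (hφinj v (by rw [h, map_zero])))
      (fun j hj => by rw [hcoeff, hkmin j hj, map_zero])
    rw [← hcoeff v k, h1, norm_prod]
    have hset : (Finset.univ.filter
          (fun i => (((hpsd v).isHermitian.eigenvalues i : ℝ) : ℂ) ≠ 0))
        = Finset.univ.filter (fun i => (hpsd v).isHermitian.eigenvalues i ≠ 0) := by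
      ext i; simp [Complex.ofReal_eq_zero]
    rw [hset]
    exact Finset.prod_congr rfl fun i _ => by
      simp only [norm_neg, Complex.norm_real, Real.norm_eq_abs]
      exact _root_.abs_of_nonneg ((hpsd v).eigenvalues_nonneg i)
  have hPv_nonneg : ∀ v, 0 ≤ Pv v :=
    fun v => Finset.prod_nonneg fun i _ => (hpsd v).eigenvalues_nonneg i
  have hPv_le : ∀ v, Pv v ≤ c ^ N := by
    intro v
    calc Pv v ≤ ∏ _i ∈ Finset.univ.filter
          (fun i => (hpsd v).isHermitian.eigenvalues i ≠ 0), c :=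
          Finset.prod_le_prod (fun i _ => (hpsd v).eigenvalues_nonneg i)
            (fun i _ => hnorm v i)
      _ = c ^ (Finset.univ.filter
          (fun i => (hpsd v).isHermitian.eigenvalues i ≠ 0)).card := Finset.prod_const c
      _ ≤ c ^ N := by
          apply pow_le_pow_right₀ hc
          exact le_trans (Finset.card_filter_le _ _) (by simp)
  have hone : (1:ℝ) ≤ ∏ v : F →+* ℂ, Pv v := by
    refine le_trans (aux_one_le_prod (p.coeff k) hknz) (le_of_eq ?_)
    exact Finset.prod_congr rfl fun v _ => habs v
  have hcard : Fintype.card (F →+* ℂ) = d := NumberField.Embeddings.card F ℂ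
  have hsplit : ∏ v : F →+* ℂ, Pv v = Pv ι * ∏ v ∈ Finset.univ.erase ι, Pv v :=
    (Finset.mul_prod_erase Finset.univ Pv (Finset.mem_univ ι)).symm
  have herase : ∏ v ∈ Finset.univ.erase ι, Pv v ≤ (c ^ N) ^ (d - 1) := by
    calc ∏ v ∈ Finset.univ.erase ι, Pv v ≤ ∏ _v ∈ Finset.univ.erase ι, c ^ N :=
          Finset.prod_le_prod (fun v _ => hPv_nonneg v) (fun v _ => hPv_le v)
      _ = (c ^ N) ^ (Finset.univ.erase ι).card := Finset.prod_const _
      _ = (c ^ N) ^ (d - 1) := by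
          rw [Finset.card_erase_of_mem (Finset.mem_univ ι), Finset.card_univ, hcard]
  have hfin : 1 ≤ Pv ι * c ^ ((d - 1) * N) := by
    have : (c ^ N) ^ (d - 1) = c ^ ((d - 1) * N) := by rw [← pow_mul, Nat.mul_comm]
    calc (1:ℝ) ≤ ∏ v : F →+* ℂ, Pv v := hone
      _ = Pv ι * ∏ v ∈ Finset.univ.erase ι, Pv v := hsplit
      _ ≤ Pv ι * c ^ ((d - 1) * N) := by
          rw [← this]
          exact mul_le_mul_of_nonneg_left herase (hPv_nonneg ι)
  have hdN : (-(((d:ℝ) - 1) * N)) = -((((d - 1) * N : ℕ)) : ℝ) := by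
    push_cast [Nat.cast_sub hd1]; ring
  rw [hdN, Real.rpow_neg (le_of_lt hc0), Real.rpow_natCast]
  have habsP : |∏ i ∈ Finset.univ.filter
        (fun i => (hpsd ι).isHermitian.eigenvalues i ≠ 0),
        (hpsd ι).isHermitian.eigenvalues i| = Pv ι := _root_.abs_of_nonneg (hPv_nonneg ι)
  rw [habsP]
  have hcpos : (0:ℝ) < c ^ ((d - 1) * N) := by positivity
  rw [inv_eq_one_div, div_le_iff₀ hcpos]
  linarith [hfin]
end

section
/- Let G be a group, H a finite group, φ a character of H and ψ a character of G × H (functions of positive type, constant on conjugacy classes, with value 1 at the identity). Suppose B := Σ_{h∈H} ψ(1,h) φ(h) ≠ 0. Then the function g ↦ B^{-1} Σ_{h∈H} ψ(g,h) φ(h) is a character of G. -/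
open scoped ComplexOrder

/-- A function `φ : G → ℂ` is of positive type if for every finite list of
group elements the matrix `(φ (g i⁻¹ * g j))` is positive semidefinite. -/
def IsPositiveType {G : Type*} [Group G] (φ : G → ℂ) : Prop :=
  ∀ (n : ℕ) (g : Fin n → G) (c : Fin n → ℂ),
    0 ≤ ∑ i : Fin n, ∑ j : Fin n, (starRingEnd ℂ) (c i) * c j * φ ((g i)⁻¹ * g j)

/-- A character of a group is a function of positive type which is constant on
conjugacy classes and takes the value `1` at the identity. -/
def IsCharacter {K : Type*} [Group K] (φ : K → ℂ) : Prop :=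
  IsPositiveType φ ∧ (∀ g k : K, φ (k * g * k⁻¹) = φ g) ∧ φ 1 = 1

lemma cinv_nonneg {z : ℂ} (hz : 0 ≤ z) : 0 ≤ z⁻¹ := by
  rw [Complex.le_def] at hz ⊢
  have him : z.im = 0 := hz.2.symm
  refine ⟨?_, ?_⟩
  · simpa [Complex.inv_re] using div_nonneg (by simpa using hz.1) (Complex.normSq_nonneg z)
  · simp [Complex.inv_im, him]

lemma isPositiveType_sum_nonneg {K : Type*} [Group K] {φ : K → ℂ} (hφ : IsPositiveType φ)
    {ι : Type*} [Fintype ι] (g : ι → K) (c : ι → ℂ) :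
    0 ≤ ∑ i : ι, ∑ j : ι, (starRingEnd ℂ) (c i) * c j * φ ((g i)⁻¹ * g j) := by
  classical
  obtain e := Fintype.equivFin ι
  have key := hφ (Fintype.card ι) (g ∘ e.symm) (c ∘ e.symm)
  have h1 : (∑ i : ι, ∑ j : ι, (starRingEnd ℂ) (c i) * c j * φ ((g i)⁻¹ * g j))
      = ∑ i : Fin (Fintype.card ι), ∑ j : Fin (Fintype.card ι),
        (starRingEnd ℂ) (c (e.symm i)) * c (e.symm j) * φ ((g (e.symm i))⁻¹ * g (e.symm j)) := by
    rw [← Equiv.sum_comp e.symm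
      (fun i => ∑ j : ι, (starRingEnd ℂ) (c i) * c j * φ ((g i)⁻¹ * g j))]
    exact Finset.sum_congr rfl fun i _ => (Equiv.sum_comp e.symm _).symm
  rw [h1]
  exact key

lemma posType_inv {K : Type*} [Group K] {φ : K → ℂ} (hφ : IsPositiveType φ) (x : K) :
    φ x⁻¹ = (starRingEnd ℂ) (φ x) := by
  have h1 : 0 ≤ φ 1 := by simpa using hφ 1 (fun _ => (1 : K)) (fun _ => 1)
  have him1 : (φ 1).im = 0 := (Complex.le_def.1 h1).2.symm
  have k1 := hφ 2 ![1, x] ![1, 1]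
  have k2 := hφ 2 ![1, x] ![1, Complex.I]
  simp [Fin.sum_univ_two] at k1 k2
  rw [Complex.le_def] at k1 k2
  have e1 := k1.2
  have e2 := k2.2
  apply Complex.ext <;>
    simp [Complex.add_im, Complex.mul_im, Complex.add_re, Complex.mul_re, him1] at e1 e2 ⊢ <;>
    linarith

lemma posType_matrix {K : Type*} [Group K] {φ : K → ℂ} (hφ : IsPositiveType φ)
    {ι : Type*} [Fintype ι] (g : ι → K) :
    Matrix.PosSemidef (Matrix.of fun i j => φ ((g i)⁻¹ * g j)) := by
  rw [Matrix.posSemidef_iff_dotProduct_mulVec]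
  constructor
  · ext i j
    have h2 := posType_inv hφ ((g j)⁻¹ * g i)
    have h3 : ((g j)⁻¹ * g i)⁻¹ = (g i)⁻¹ * g j := by group
    rw [h3] at h2
    simp only [Matrix.conjTranspose_apply, Matrix.of_apply, Complex.star_def, ← h2,
      RingHom.id_apply, Complex.conj_conj]
  · intro x
    have key := isPositiveType_sum_nonneg hφ g x
    have : dotProduct (star x) ((Matrix.of fun i j => φ ((g i)⁻¹ * g j)).mulVec x)
        = ∑ i : ι, ∑ j : ι, (starRingEnd ℂ) (x i) * x j * φ ((g i)⁻¹ * g j) := by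
      simp only [dotProduct, Matrix.mulVec, dotProduct, Pi.star_apply,
        Matrix.of_apply, Finset.mul_sum]
      exact Finset.sum_congr rfl fun i _ => Finset.sum_congr rfl fun j _ => by
        simp [Complex.star_def]; ring
    rw [this]; exact key

lemma schur_form {K₁ K₂ : Type*} [Group K₁] [Group K₂] {φ₁ : K₁ → ℂ} {φ₂ : K₂ → ℂ}
    (h1 : IsPositiveType φ₁) (h2 : IsPositiveType φ₂)
    {ι : Type*} [Fintype ι] (k₁ : ι → K₁) (k₂ : ι → K₂) (c : ι → ℂ) :
    0 ≤ ∑ p : ι, ∑ q : ι, (starRingEnd ℂ) (c p) * c q *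
      (φ₁ ((k₁ p)⁻¹ * k₁ q) * φ₂ ((k₂ p)⁻¹ * k₂ q)) := by
  classical
  open scoped MatrixOrder in
  obtain ⟨N, hN⟩ := CStarAlgebra.nonneg_iff_eq_star_mul_self.mp (posType_matrix h2 k₂).nonneg
  have hA : ∀ p q : ι, φ₂ ((k₂ p)⁻¹ * k₂ q) = ∑ r : ι, (starRingEnd ℂ) (N r p) * N r q := by
    intro p q
    have := congrFun (congrFun hN p) q
    simpa [Matrix.mul_apply, Matrix.star_eq_conjTranspose, Matrix.conjTranspose_apply, Complex.star_def] using this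
  have expand : ∀ p q : ι, (starRingEnd ℂ) (c p) * c q *
      (φ₁ ((k₁ p)⁻¹ * k₁ q) * φ₂ ((k₂ p)⁻¹ * k₂ q))
      = ∑ r : ι, (starRingEnd ℂ) (c p * N r p) * (c q * N r q) * φ₁ ((k₁ p)⁻¹ * k₁ q) := by
    intro p q
    rw [hA, Finset.mul_sum, Finset.mul_sum]
    refine Finset.sum_congr rfl fun r _ => by simp only [map_mul]; ring
  simp_rw [expand]
  have swap : (∑ p : ι, ∑ q : ι, ∑ r : ι,
        (starRingEnd ℂ) (c p * N r p) * (c q * N r q) * φ₁ ((k₁ p)⁻¹ * k₁ q))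
      = ∑ r : ι, ∑ p : ι, ∑ q : ι,
        (starRingEnd ℂ) (c p * N r p) * (c q * N r q) * φ₁ ((k₁ p)⁻¹ * k₁ q) :=
    (Finset.sum_congr rfl fun p _ => Finset.sum_comm).trans Finset.sum_comm
  rw [swap]
  exact Finset.sum_nonneg fun r _ => isPositiveType_sum_nonneg h1 k₁ fun p => c p * N r p

lemma sum_shift {H : Type*} [Group H] [Fintype H] (f : H → ℂ) :
    ∑ h : H, ∑ h' : H, f (h⁻¹ * h') = (Fintype.card H : ℂ) * ∑ k : H, f k := by
  have key : ∀ h : H, ∑ h' : H, f (h⁻¹ * h') = ∑ k : H, f k := fun h => by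
    simpa using Equiv.sum_comp (Equiv.mulLeft h⁻¹) f
  simp [key, Finset.sum_const, Finset.card_univ, nsmul_eq_mul]

theorem stmt10 (G H : Type*) [Group G] [Group H] [Fintype H]
    (φ : H → ℂ) (ψ : G × H → ℂ) (hφ : IsCharacter φ) (hψ : IsCharacter ψ)
    (hB : (∑ h : H, ψ (1, h) * φ h) ≠ 0) :
    IsCharacter (fun g => (∑ h : H, ψ (1, h) * φ h)⁻¹ * ∑ h : H, ψ (g, h) * φ h) := by
  have hψpt := hψ.1
  have hφpt := hφ.1
  set B : ℂ := ∑ h : H, ψ (1, h) * φ h with hBdef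
  have hcard : (Fintype.card H : ℂ) ≠ 0 := by
    exact_mod_cast (Nat.cast_ne_zero (R := ℂ)).mpr Fintype.card_ne_zero
  have hcardnn : (0 : ℂ) ≤ (Fintype.card H : ℂ) := by
    rw [Complex.le_def]; simp
  have hBn : 0 ≤ B := by
    have S := schur_form hψpt hφpt (ι := H) (fun h => ((1 : G), h)) id (fun _ => 1)
    have S' : 0 ≤ ∑ h : H, ∑ h' : H, ψ (1, h⁻¹ * h') * φ (h⁻¹ * h') := by
      simpa [Prod.mk_mul_mk, Prod.inv_mk] using S
    rw [sum_shift (fun k => ψ (1, k) * φ k)] at S'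
    have := mul_nonneg (cinv_nonneg hcardnn) S'
    rwa [← mul_assoc, inv_mul_cancel₀ hcard, one_mul] at this
  refine ⟨?_, ?_, ?_⟩
  · -- positive type
    intro n g c
    simp only
    have hT : 0 ≤ ∑ i : Fin n, ∑ j : Fin n, (starRingEnd ℂ) (c i) * c j *
        ∑ h : H, ψ ((g i)⁻¹ * g j, h) * φ h := by
      have S := schur_form hψpt hφpt (ι := Fin n × H)
        (fun p => (g p.1, p.2)) (fun p => p.2) (fun p => c p.1)
      have S' : 0 ≤ ∑ i : Fin n, ∑ h : H, ∑ j : Fin n, ∑ h' : H,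
          (starRingEnd ℂ) (c i) * c j * (ψ ((g i)⁻¹ * g j, h⁻¹ * h') * φ (h⁻¹ * h')) := by
        simpa [Fintype.sum_prod_type, Prod.mk_mul_mk, Prod.inv_mk] using S
      have S'' : 0 ≤ ∑ i : Fin n, ∑ j : Fin n, ∑ h : H, ∑ h' : H,
          (starRingEnd ℂ) (c i) * c j * (ψ ((g i)⁻¹ * g j, h⁻¹ * h') * φ (h⁻¹ * h')) := by
        refine le_of_le_of_eq S' (Finset.sum_congr rfl fun i _ => Finset.sum_comm)
      have key : ∀ i j : Fin n, (∑ h : H, ∑ h' : H,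
          (starRingEnd ℂ) (c i) * c j * (ψ ((g i)⁻¹ * g j, h⁻¹ * h') * φ (h⁻¹ * h')))
          = (Fintype.card H : ℂ) * ((starRingEnd ℂ) (c i) * c j *
            ∑ h : H, ψ ((g i)⁻¹ * g j, h) * φ h) := by
        intro i j
        rw [sum_shift (fun k => (starRingEnd ℂ) (c i) * c j * (ψ ((g i)⁻¹ * g j, k) * φ k))]
        rw [← Finset.mul_sum]
      simp_rw [key, ← Finset.mul_sum] at S''
      have := mul_nonneg (cinv_nonneg hcardnn) S''
      rwa [← mul_assoc, inv_mul_cancel₀ hcard, one_mul] at this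
    have factor : (∑ i : Fin n, ∑ j : Fin n, (starRingEnd ℂ) (c i) * c j *
          (B⁻¹ * ∑ h : H, ψ ((g i)⁻¹ * g j, h) * φ h))
        = B⁻¹ * ∑ i : Fin n, ∑ j : Fin n, (starRingEnd ℂ) (c i) * c j *
          ∑ h : H, ψ ((g i)⁻¹ * g j, h) * φ h := by
      rw [Finset.mul_sum]
      refine Finset.sum_congr rfl fun i _ => ?_
      rw [Finset.mul_sum]
      exact Finset.sum_congr rfl fun j _ => by ring
    rw [factor]
    exact mul_nonneg (cinv_nonneg hBn) hT
  · -- conjugation invariance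
    intro g k
    simp only
    congr 1
    refine Finset.sum_congr rfl fun h _ => ?_
    have := hψ.2.1 (g, h) (k, 1)
    simp only [Prod.mk_mul_mk, Prod.inv_mk, inv_one, one_mul, mul_one] at this
    rw [this]
  · -- value at 1
    simp only
    exact inv_mul_cancel₀ hB
end

section
/- Let G be a group and H ≤ G a finite subgroup such that every h ∈ H has finite index centralizer [G : C_G(h)] < ∞. Then the function i_G : G × H → ℂ given by i_G(g,h) = [G : C_G(h)]^{-1} if g is conjugate to h in G and 0 otherwise, is a function of positive type on G × H. -/
open scoped ComplexOrder

open scoped Classical in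
lemma pos_aux {α : Type*} {n : ℕ} (v : Fin n → α) (c : Fin n → ℂ) :
    0 ≤ ∑ i : Fin n, ∑ j : Fin n,
      (starRingEnd ℂ) (c i) * c j * (if v i = v j then 1 else 0) := by
  classical
  set f : α → ℂ := fun w => ∑ i ∈ Finset.univ.filter (fun i => v i = w), c i with hf
  have step1 : ∀ i : Fin n, ∑ j : Fin n,
      (starRingEnd ℂ) (c i) * c j * (if v i = v j then 1 else 0)
      = (starRingEnd ℂ) (c i) * f (v i) := by
    intro i
    rw [hf]
    simp only [Finset.sum_filter, Finset.mul_sum]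
    refine Finset.sum_congr rfl fun j _ => ?_
    by_cases h : v i = v j <;> simp [h, eq_comm, mul_comm]
  calc (0:ℂ) ≤ ∑ w ∈ Finset.univ.image v, (starRingEnd ℂ) (f w) * f w := by
        refine Finset.sum_nonneg fun w _ => ?_
        exact star_mul_self_nonneg (f w)
    _ = ∑ i : Fin n, (starRingEnd ℂ) (c i) * f (v i) := by
        rw [← Finset.sum_fiberwise_of_maps_to (g := v) (fun i _ => Finset.mem_image_of_mem v (Finset.mem_univ i))]
        refine Finset.sum_congr rfl fun w _ => ?_
        rw [hf]
        simp only [map_sum, Finset.sum_mul]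
        refine Finset.sum_congr rfl fun i hi => ?_
        rw [(Finset.mem_filter.mp hi).2]
    _ = _ := by
        exact (Finset.sum_congr rfl fun i _ => (step1 i)).symm

lemma conj_eq_of_comm {G : Type*} [Group G] {a h : G} (hc : a * h = h * a) :
    a * h * a⁻¹ = h := by rw [hc]; exact mul_inv_cancel_right h a

open scoped Classical in
lemma main_count {G : Type*} [Group G] (N : Subgroup G) [Fintype (G ⧸ N)]
    (h x : G) (hN : N ≤ Subgroup.centralizer {h})
    (hC : (Subgroup.centralizer {h}).FiniteIndex) :
    (if IsConj x h then ((Subgroup.centralizer {h}).index : ℂ)⁻¹ else 0)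
      = (N.index : ℂ)⁻¹ *
        ∑ q : G ⧸ N, (if (Quotient.out q) * h * (Quotient.out q)⁻¹ = x then (1:ℂ) else 0) := by
  classical
  set C := Subgroup.centralizer {h} with hCdef
  by_cases hconj : IsConj x h
  · obtain ⟨g₀, hg₀⟩ := isConj_iff.mp hconj.symm
    set P : G ⧸ N → Prop := fun q => (Quotient.out q) * h * (Quotient.out q)⁻¹ = x with hP
    haveI : N.FiniteIndex := N.finiteIndex_of_finite_quotient
    set F : (C ⧸ (N.subgroupOf C)) → G ⧸ N := fun qc => QuotientGroup.mk (g₀ * ((Quotient.out qc : C) : G)) with hF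
    have hcond : ∀ qc : C ⧸ (N.subgroupOf C), P (F qc) := by
      intro qc
      set cG : G := ((Quotient.out qc : C) : G) with hcG
      set y := Quotient.out (F qc) with hy
      have hmem : (g₀ * cG)⁻¹ * y ∈ N := by
        rw [← QuotientGroup.eq, hy, QuotientGroup.out_eq']
      have hyeq : y = g₀ * (cG * ((g₀ * cG)⁻¹ * y)) := by group
      have hmC : ((g₀ * cG)⁻¹ * y) * h = h * ((g₀ * cG)⁻¹ * y) :=
        Subgroup.mem_centralizer_singleton_iff.mp (hN hmem)
      have hcC : cG * h = h * cG :=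
        Subgroup.mem_centralizer_singleton_iff.mp (Quotient.out qc : C).2
      have hcm : (cG * ((g₀ * cG)⁻¹ * y)) * h = h * (cG * ((g₀ * cG)⁻¹ * y)) := by
        rw [mul_assoc, hmC, ← mul_assoc, hcC, mul_assoc]
      show y * h * y⁻¹ = x
      calc y * h * y⁻¹
          = g₀ * ((cG * ((g₀ * cG)⁻¹ * y)) * h * (cG * ((g₀ * cG)⁻¹ * y))⁻¹) * g₀⁻¹ := by
            conv_lhs => rw [hyeq]
            group
        _ = g₀ * h * g₀⁻¹ := by rw [conj_eq_of_comm hcm]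
        _ = x := hg₀
    have key : Nat.card (C ⧸ (N.subgroupOf C)) = Nat.card {q : G ⧸ N // P q} := by
      refine Nat.card_eq_of_bijective (fun qc => ⟨F qc, hcond qc⟩) ⟨?_, ?_⟩
      · -- injective
        intro q1 q2 heq
        have h1 : F q1 = F q2 := congrArg Subtype.val heq
        rw [hF] at h1
        simp only at h1
        rw [QuotientGroup.eq] at h1
        have h2 : ((Quotient.out q1 : C)⁻¹ * (Quotient.out q2 : C) : C) ∈ (N.subgroupOf C) := by
          rw [Subgroup.mem_subgroupOf]
          convert h1 using 1
          push_cast; group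
        calc q1 = QuotientGroup.mk (Quotient.out q1 : C) := (QuotientGroup.out_eq' q1).symm
          _ = QuotientGroup.mk (Quotient.out q2 : C) := (QuotientGroup.eq).mpr h2
          _ = q2 := QuotientGroup.out_eq' q2
      · -- surjective
        rintro ⟨q, hq⟩
        have hq' : (Quotient.out q : G) * h * (Quotient.out q : G)⁻¹ = x := hq
        have hcmem : g₀⁻¹ * (Quotient.out q : G) ∈ C := by
          rw [hCdef, Subgroup.mem_centralizer_singleton_iff]
          have e0 : g₀ * ((g₀⁻¹ * Quotient.out q) * h) = g₀ * (h * (g₀⁻¹ * Quotient.out q)) := by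
            have e1 : g₀ * (h * (g₀⁻¹ * Quotient.out q)) = (g₀ * h * g₀⁻¹) * Quotient.out q := by group
            have e2 : g₀ * ((g₀⁻¹ * Quotient.out q) * h) = Quotient.out q * h := by group
            rw [e1, e2, hg₀, ← hq']; group
          exact mul_left_cancel e0
        refine ⟨QuotientGroup.mk (⟨g₀⁻¹ * Quotient.out q, hcmem⟩ : C), ?_⟩
        apply Subtype.ext
        show F (QuotientGroup.mk (⟨g₀⁻¹ * Quotient.out q, hcmem⟩ : C)) = q
        set cc : C := (Quotient.out (QuotientGroup.mk (⟨g₀⁻¹ * Quotient.out q, hcmem⟩ : C) : C ⧸ (N.subgroupOf C)) : C) with hcc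
        have hmem2 : ((⟨g₀⁻¹ * Quotient.out q, hcmem⟩ : C))⁻¹ * cc ∈ (N.subgroupOf C) := by
          rw [← QuotientGroup.eq, hcc, QuotientGroup.out_eq']
        rw [Subgroup.mem_subgroupOf] at hmem2
        have hmem3 : (Quotient.out q : G)⁻¹ * (g₀ * (cc : G)) ∈ N := by
          convert hmem2 using 1
          push_cast; group
        calc F (QuotientGroup.mk (⟨g₀⁻¹ * Quotient.out q, hcmem⟩ : C))
            = QuotientGroup.mk (g₀ * (cc : G)) := rfl
          _ = QuotientGroup.mk (Quotient.out q : G) := ((QuotientGroup.eq).mpr hmem3).symm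
          _ = q := QuotientGroup.out_eq' q
    have hsum : ∑ q : G ⧸ N, (if (Quotient.out q) * h * (Quotient.out q)⁻¹ = x then (1:ℂ) else 0)
        = ((Finset.univ.filter P).card : ℂ) := by
      rw [Finset.sum_boole]
    have hcard : (Finset.univ.filter P).card = N.relIndex C := by
      rw [← Fintype.card_subtype, ← Nat.card_eq_fintype_card, ← key]
      rfl
    have hrel : N.relIndex C * C.index = N.index := Subgroup.relIndex_mul_index hN
    have hCne : (C.index : ℂ) ≠ 0 := Nat.cast_ne_zero.mpr hC.index_ne_zero
    have hNne : (N.index : ℂ) ≠ 0 := Nat.cast_ne_zero.mpr ‹N.FiniteIndex›.index_ne_zero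
    have hcast : (N.relIndex C : ℂ) * (C.index : ℂ) = (N.index : ℂ) := by
      exact_mod_cast congrArg Nat.cast hrel
    have hrelne : ((N.relIndex C : ℕ) : ℂ) ≠ 0 := by
      intro h0; exact hNne (by rw [← hcast, h0, zero_mul])
    rw [if_pos hconj, hsum, hcard, ← hcast, mul_inv,
      mul_comm ((N.relIndex C : ℕ) : ℂ)⁻¹, mul_assoc, inv_mul_cancel₀ hrelne, mul_one]
  · rw [if_neg hconj]
    have hz : ∀ q : G ⧸ N, (if (Quotient.out q) * h * (Quotient.out q)⁻¹ = x then (1:ℂ) else 0) = 0 := by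
      intro q
      rw [if_neg]
      intro hcon
      exact hconj ((isConj_iff.mpr ⟨Quotient.out q, hcon⟩).symm)
    rw [Finset.sum_congr rfl (fun q _ => hz q), Finset.sum_const, smul_zero, mul_zero]

open scoped Classical in
theorem stmt11 (G : Type*) [Group G] (H : Subgroup G) [Finite H]
    (hfin : ∀ h : H, (Subgroup.centralizer {(h : G)}).FiniteIndex) :
    IsPositiveType (fun p : G × H =>
      if IsConj p.1 (p.2 : G)
        then ((Subgroup.centralizer {(p.2 : G)}).index : ℂ)⁻¹ else 0) := by
  intro n g c
  set N : Subgroup G := ⨅ h : H, Subgroup.centralizer {(h : G)} with hNdef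
  haveI hNfi : N.FiniteIndex := Subgroup.finiteIndex_iInf hfin
  haveI : Fintype (G ⧸ N) := Fintype.ofFinite _
  have hle : ∀ h : H, N ≤ Subgroup.centralizer {(h : G)} := fun h => iInf_le _ h
  have key : ∀ i j : Fin n,
      (if IsConj ((g i)⁻¹ * g j).1 ((((g i)⁻¹ * g j).2 : H) : G)
        then ((Subgroup.centralizer {((((g i)⁻¹ * g j).2 : H) : G)}).index : ℂ)⁻¹ else 0)
      = (N.index : ℂ)⁻¹ * ∑ q : G ⧸ N,
          (if (Quotient.out q) * ((((g i)⁻¹ * g j).2 : H) : G) * (Quotient.out q)⁻¹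
              = ((g i)⁻¹ * g j).1 then (1:ℂ) else 0) :=
    fun i j => main_count N _ _ (hle _) (hfin _)
  have hk : (0:ℂ) ≤ ((N.index : ℂ))⁻¹ := by
    have h1 : ((N.index : ℂ))⁻¹ = Complex.ofReal ((N.index : ℝ))⁻¹ := by
      push_cast; ring
    rw [h1]
    exact Complex.zero_le_real.mpr (by positivity)
  calc (0:ℂ)
      ≤ (N.index : ℂ)⁻¹ * ∑ q : G ⧸ N, ∑ i : Fin n, ∑ j : Fin n,
          (starRingEnd ℂ) (c i) * c j *
          (if (Quotient.out q) * ((((g i)⁻¹ * g j).2 : H) : G) * (Quotient.out q)⁻¹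
              = ((g i)⁻¹ * g j).1 then (1:ℂ) else 0) := by
        refine mul_nonneg hk (Finset.sum_nonneg fun q _ => ?_)
        set w : G := Quotient.out q with hw
        set v : Fin n → G := fun i => (g i).1 * w * ((g i).2 : G)⁻¹ with hv
        have hiff : ∀ i j : Fin n,
            (w * ((((g i)⁻¹ * g j).2 : H) : G) * w⁻¹ = ((g i)⁻¹ * g j).1) ↔ (v i = v j) := by
          intro i j
          have e2 : ((((g i)⁻¹ * g j).2 : H) : G) = ((g i).2 : G)⁻¹ * ((g j).2 : G) := by
            simp [Prod.snd_mul, Prod.snd_inv]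
          have e1 : ((g i)⁻¹ * g j).1 = (g i).1⁻¹ * (g j).1 := by
            simp [Prod.fst_mul, Prod.fst_inv]
          rw [e1, e2, hv]
          simp only []
          constructor
          · intro hh
            have h3 : (g j).1 = (g i).1 * (w * (((g i).2 : G)⁻¹ * ((g j).2 : G)) * w⁻¹) := by
              rw [hh]; group
            rw [h3]; group
          · intro hh
            have h3 : (g j).1 = (g i).1 * w * ((g i).2 : G)⁻¹ * ((g j).2 : G) * w⁻¹ := by
              rw [hh]; group
            rw [h3]; group
        calc (0:ℂ) ≤ ∑ i : Fin n, ∑ j : Fin n,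
              (starRingEnd ℂ) (c i) * c j * (if v i = v j then 1 else 0) := pos_aux v c
          _ = _ := by
              refine Finset.sum_congr rfl fun i _ => Finset.sum_congr rfl fun j _ => ?_
              rw [if_congr (hiff i j).symm rfl rfl]
    _ = ∑ i : Fin n, ∑ j : Fin n, (starRingEnd ℂ) (c i) * c j *
          ((N.index : ℂ)⁻¹ * ∑ q : G ⧸ N,
            (if (Quotient.out q) * ((((g i)⁻¹ * g j).2 : H) : G) * (Quotient.out q)⁻¹
                = ((g i)⁻¹ * g j).1 then (1:ℂ) else 0)) := by
        rw [eq_comm]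
        calc ∑ i : Fin n, ∑ j : Fin n, (starRingEnd ℂ) (c i) * c j *
              ((N.index : ℂ)⁻¹ * ∑ q : G ⧸ N,
                (if (Quotient.out q) * ((((g i)⁻¹ * g j).2 : H) : G) * (Quotient.out q)⁻¹
                    = ((g i)⁻¹ * g j).1 then (1:ℂ) else 0))
            = ∑ i : Fin n, ∑ j : Fin n, ∑ q : G ⧸ N, (N.index : ℂ)⁻¹ *
                ((starRingEnd ℂ) (c i) * c j *
                (if (Quotient.out q) * ((((g i)⁻¹ * g j).2 : H) : G) * (Quotient.out q)⁻¹
                    = ((g i)⁻¹ * g j).1 then (1:ℂ) else 0)) := by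
              refine Finset.sum_congr rfl fun i _ => Finset.sum_congr rfl fun j _ => ?_
              rw [Finset.mul_sum, Finset.mul_sum]
              exact Finset.sum_congr rfl fun q _ => by ring
          _ = ∑ i : Fin n, ∑ q : G ⧸ N, ∑ j : Fin n, (N.index : ℂ)⁻¹ *
                ((starRingEnd ℂ) (c i) * c j *
                (if (Quotient.out q) * ((((g i)⁻¹ * g j).2 : H) : G) * (Quotient.out q)⁻¹
                    = ((g i)⁻¹ * g j).1 then (1:ℂ) else 0)) :=
              Finset.sum_congr rfl fun i _ => Finset.sum_comm
          _ = ∑ q : G ⧸ N, ∑ i : Fin n, ∑ j : Fin n, (N.index : ℂ)⁻¹ *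
                ((starRingEnd ℂ) (c i) * c j *
                (if (Quotient.out q) * ((((g i)⁻¹ * g j).2 : H) : G) * (Quotient.out q)⁻¹
                    = ((g i)⁻¹ * g j).1 then (1:ℂ) else 0)) :=
              Finset.sum_comm
          _ = (N.index : ℂ)⁻¹ * ∑ q : G ⧸ N, ∑ i : Fin n, ∑ j : Fin n,
                (starRingEnd ℂ) (c i) * c j *
                (if (Quotient.out q) * ((((g i)⁻¹ * g j).2 : H) : G) * (Quotient.out q)⁻¹
                    = ((g i)⁻¹ * g j).1 then (1:ℂ) else 0) := by
              simp only [← Finset.mul_sum]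
    _ = ∑ i : Fin n, ∑ j : Fin n, (starRingEnd ℂ) (c i) * c j *
          (if IsConj ((g i)⁻¹ * g j).1 ((((g i)⁻¹ * g j).2 : H) : G)
            then ((Subgroup.centralizer {((((g i)⁻¹ * g j).2 : H) : G)}).index : ℂ)⁻¹ else 0) := by
        refine Finset.sum_congr rfl fun i _ => Finset.sum_congr rfl fun j _ => ?_
        rw [key i j]
    _ = _ := rfl
end

section
/- Let G be a group, H ≤ G a finite subgroup, and N₁ ⊇ N₂ ⊇ … a decreasing sequence of normal subgroups of G with ⋂_k N_k = {1} and N_k ∩ H = {1} for all k. Then for every x ∈ G, lim_{k→∞} [G/N_k : C_{G/N_k}(x N_k)] = [G : C_G(x)], where both sides may be infinite (the limit being ∞ means the indices tend to infinity). -/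
open scoped Classical in
/-- The index of a subgroup, valued in `ℕ∞`, with `⊤` for infinite index. -/
noncomputable def extIndex {G : Type*} [Group G] (K : Subgroup G) : ℕ∞ :=
  if K.FiniteIndex then (K.index : ℕ∞) else ⊤

/-- The index of the centralizer of `y` is the cardinality of the conjugacy class. -/
lemma index_centralizer_eq {Q : Type*} [Group Q] (y : Q) :
    (Subgroup.centralizer {y}).index = (MulAction.orbit (ConjAct Q) y).ncard := by
  rw [Subgroup.centralizer_eq_comap_stabilizer]
  erw [Subgroup.index_comap_of_surjective _ ConjAct.toConjAct.surjective]
  rw [MulAction.index_stabilizer]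

/-- Finitely many distinct conjugates of `y` give a lower bound on `extIndex`. -/
lemma finset_card_le_extIndex {Q : Type*} [Group Q] (y : Q) (T : Finset Q)
    (hT : (T : Set Q) ⊆ MulAction.orbit (ConjAct Q) y) :
    (T.card : ℕ∞) ≤ extIndex (Subgroup.centralizer {y}) := by
  unfold extIndex
  split_ifs with h
  · have hidx := h.index_ne_zero
    rw [index_centralizer_eq] at hidx ⊢
    have hfin : (MulAction.orbit (ConjAct Q) y).Finite :=
      Set.finite_of_ncard_ne_zero hidx
    have := Set.ncard_le_ncard hT hfin
    rw [Set.ncard_coe_finset] at this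
    exact_mod_cast this
  · exact le_top

lemma extIndex_quotient_le {G : Type*} [Group G] (M : Subgroup G) [M.Normal] (x : G) :
    extIndex (Subgroup.centralizer {(QuotientGroup.mk x : G ⧸ M)}) ≤
      extIndex (Subgroup.centralizer {x}) := by
  set K := Subgroup.centralizer {(QuotientGroup.mk x : G ⧸ M)}
  have hle : Subgroup.centralizer {x} ≤ K.comap (QuotientGroup.mk' M) := by
    intro g hg
    simp only [Subgroup.mem_centralizer_iff, Set.mem_singleton_iff, forall_eq] at hg
    simp only [Subgroup.mem_comap, K, Subgroup.mem_centralizer_iff, Set.mem_singleton_iff,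
      forall_eq, QuotientGroup.mk'_apply]
    rw [← QuotientGroup.mk_mul, ← QuotientGroup.mk_mul, hg]
  have hdvd : K.index ∣ (Subgroup.centralizer {x}).index := by
    have := Subgroup.index_dvd_of_le hle
    rwa [Subgroup.index_comap_of_surjective _ (QuotientGroup.mk'_surjective M)] at this
  unfold extIndex
  by_cases h2 : (Subgroup.centralizer {x} : Subgroup G).FiniteIndex
  · have hK : K.FiniteIndex := ⟨fun h0 => h2.index_ne_zero (zero_dvd_iff.mp (h0 ▸ hdvd))⟩
    rw [if_pos h2, if_pos hK]
    exact_mod_cast Nat.le_of_dvd (Nat.pos_of_ne_zero h2.index_ne_zero) hdvd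
  · rw [if_neg h2]; exact le_top

theorem stmt12 (G : Type*) [Group G] (H : Subgroup G) [Finite H]
    (N : ℕ → Subgroup G) [hnorm : ∀ k, (N k).Normal]
    (hdec : ∀ k l, k ≤ l → N l ≤ N k)
    (hint : ⨅ k, N k = ⊥)
    (hNH : ∀ k, N k ⊓ H = ⊥) (x : G) :
    Filter.Tendsto
      (fun k => extIndex (Subgroup.centralizer {(QuotientGroup.mk x : G ⧸ N k)}))
      Filter.atTop (nhds (extIndex (Subgroup.centralizer {x}))) := by
  classical
  -- eventual injectivity of the quotient map on a finite set
  have hinj : ∀ T : Finset G, ∀ᶠ k in Filter.atTop,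
      Set.InjOn (QuotientGroup.mk (s := N k)) (T : Set G) := by
    intro T
    have key : ∀ a ∈ T, ∀ b ∈ T, a ≠ b → ∀ᶠ k in Filter.atTop,
        a⁻¹ * b ∉ N k := by
      intro a _ b _ hab
      have hne : a⁻¹ * b ≠ 1 := fun h1 => hab (inv_mul_eq_one.mp h1)
      have : ∃ k, a⁻¹ * b ∉ N k := by
        by_contra hc
        push_neg at hc
        have : a⁻¹ * b ∈ ⨅ k, N k := Subgroup.mem_iInf.mpr hc
        rw [hint, Subgroup.mem_bot] at this
        exact hne this
      obtain ⟨k, hk⟩ := this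
      exact Filter.eventually_atTop.mpr ⟨k, fun l hl hmem => hk (hdec k l hl hmem)⟩
    have := (T.eventually_all.mpr fun a ha => T.eventually_all.mpr fun b hb =>
      (em (a = b)).elim (fun h => Filter.Eventually.of_forall fun _ => Or.inl h)
        (fun h => (key a ha b hb h).mono fun k hk => Or.inr hk))
    refine this.mono fun k hk a ha b hb hab => ?_
    rcases hk a ha b hb with h | h
    · exact h
    · exfalso
      exact h (by rwa [QuotientGroup.eq] at hab)
  -- lower bound: eventually, card T ≤ extIndex of quotient centralizer
  have hlow : ∀ T : Finset G, (T : Set G) ⊆ MulAction.orbit (ConjAct G) x →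
      ∀ᶠ k in Filter.atTop, (T.card : ℕ∞) ≤
        extIndex (Subgroup.centralizer {(QuotientGroup.mk x : G ⧸ N k)}) := by
    intro T hT
    refine (hinj T).mono fun k hk => ?_
    have hcard : (T.image (QuotientGroup.mk (s := N k))).card = T.card :=
      Finset.card_image_of_injOn hk
    rw [← hcard]
    refine finset_card_le_extIndex _ _ ?_
    intro z hz
    simp only [Finset.coe_image, Set.mem_image, Finset.mem_coe] at hz
    obtain ⟨a, ha, rfl⟩ := hz
    rw [ConjAct.mem_orbit_conjAct]
    exact (QuotientGroup.mk' (N k)).map_isConj (ConjAct.mem_orbit_conjAct.mp (hT ha))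
  by_cases h : (Subgroup.centralizer {x} : Subgroup G).FiniteIndex
  · -- finite case: eventually constant
    have hval : extIndex (Subgroup.centralizer {x}) =
        ((Subgroup.centralizer {x} : Subgroup G).index : ℕ∞) := if_pos h
    have horb : (MulAction.orbit (ConjAct G) x).Finite := by
      apply Set.finite_of_ncard_ne_zero
      rw [← index_centralizer_eq]; exact h.index_ne_zero
    obtain ⟨T, hTsub, hTcard⟩ :
        ∃ T : Finset G, (T : Set G) ⊆ MulAction.orbit (ConjAct G) x ∧
          T.card = (Subgroup.centralizer {x} : Subgroup G).index := by
      refine ⟨horb.toFinset, by simp, ?_⟩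
      rw [index_centralizer_eq, Set.ncard_eq_toFinset_card _ horb]
    have heq : ∀ᶠ k in Filter.atTop,
        extIndex (Subgroup.centralizer {(QuotientGroup.mk x : G ⧸ N k)}) =
          extIndex (Subgroup.centralizer {x}) := by
      refine (hlow T hTsub).mono fun k hk => ?_
      refine le_antisymm (extIndex_quotient_le (N k) x) ?_
      rw [hval, ← hTcard]; exact hk
    exact (tendsto_const_nhds.congr' (heq.mono fun k hk => hk.symm))
  · -- infinite case: tends to ⊤
    have hval : extIndex (Subgroup.centralizer {x}) = ⊤ := if_neg h
    rw [hval, ENat.tendsto_nhds_top_iff_natCast_lt]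
    intro m
    have horb : (MulAction.orbit (ConjAct G) x).Infinite := by
      intro hfin
      apply h
      constructor
      rw [index_centralizer_eq]
      exact ((Set.ncard_pos hfin).mpr ⟨x, MulAction.mem_orbit_self x⟩).ne'
    obtain ⟨t, hts, htfin, htcard⟩ := horb.exists_subset_ncard_eq (m + 1)
    refine (hlow htfin.toFinset (by simpa using hts)).mono fun k hk => ?_
    rw [Set.ncard_eq_toFinset_card _ htfin] at htcard
    rw [htcard] at hk
    exact lt_of_lt_of_le (by exact_mod_cast Nat.lt_succ_self m) hk
end

section
/- Let D_∞ = ℤ ⋊ {±1} be the infinite dihedral group and Γ_m = mℤ ⋊ {±1} ≤ D_∞. Then for all k ∈ ℤ and ε ∈ {±1}, the number of cosets f ∈ D_∞/Γ_m with f^{-1}(k,ε)f ∈ Γ_m equals: m if ε = 1 and m | k; gcd(2,m) if ε = −1 and gcd(2,m) | k; and 0 otherwise. Consequently, the normalized fixed-point counts |{f ∈ D_∞/Γ_m : f^{-1}(k,ε)f ∈ Γ_m}| / m tend, as m → ∞, to 1 if (k,ε)=(0,1) and to 0 otherwise; i.e., the sequence (Γ_m) is a Farber sequence in D_∞. -/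
/-- The action of `{±1} = ℤˣ` on `ℤ` (written multiplicatively), used to build the
infinite dihedral group `D∞ = ℤ ⋊ {±1}`. -/
def dihedralAut : ℤˣ →* MulAut (Multiplicative ℤ) where
  toFun ε := AddEquiv.toMultiplicative (DistribMulAction.toAddAut ℤˣ ℤ ε)
  map_one' := by
    ext x
    show Multiplicative.ofAdd ((1 : ℤˣ) • Multiplicative.toAdd x) = x
    simp
  map_mul' a b := by
    ext x
    show Multiplicative.ofAdd ((a * b : ℤˣ) • Multiplicative.toAdd x) =
      Multiplicative.ofAdd (a • (b : ℤˣ) • Multiplicative.toAdd x)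
    rw [mul_smul]

/-- The infinite dihedral group `D∞ = ℤ ⋊ {±1}`. -/
abbrev DInf : Type := SemidirectProduct (Multiplicative ℤ) ℤˣ dihedralAut

lemma dihedralAut_toAdd (ε : ℤˣ) (l : Multiplicative ℤ) :
    Multiplicative.toAdd (dihedralAut ε l) = (ε : ℤ) * Multiplicative.toAdd l := rfl

/-- The subgroup `Γ_m = mℤ ⋊ {±1}` of `D∞`. -/
def DihedralSub (m : ℕ) : Subgroup DInf where
  carrier := {x | (m : ℤ) ∣ Multiplicative.toAdd (SemidirectProduct.left x)}
  mul_mem' := by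
    intro a b ha hb
    simp only [Set.mem_setOf_eq, SemidirectProduct.mul_left, toAdd_mul] at *
    exact dvd_add ha (by rw [dihedralAut_toAdd]; exact hb.mul_left _)
  one_mem' := by
    simp only [Set.mem_setOf_eq, SemidirectProduct.one_left, toAdd_one]
    exact dvd_zero _
  inv_mem' := by
    intro a ha
    simp only [Set.mem_setOf_eq, SemidirectProduct.inv_left, dihedralAut_toAdd,
      toAdd_inv] at *
    exact (ha.neg_right).mul_left _

-- membership lemma
lemma mem_dihedralSub_iff (m : ℕ) (x : DInf) :
    x ∈ DihedralSub m ↔ (m : ℤ) ∣ Multiplicative.toAdd x.left := Iff.rfl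

lemma conj_mem_iff (m : ℕ) (g : DInf) (k : ℤ) (ε : ℤˣ) :
    g⁻¹ * (⟨Multiplicative.ofAdd k, ε⟩ : DInf) * g ∈ DihedralSub m ↔
      (m : ℤ) ∣ k + ((ε : ℤ) - 1) * Multiplicative.toAdd g.left := by
  rw [mem_dihedralSub_iff]
  simp only [SemidirectProduct.mul_left, SemidirectProduct.inv_left,
    SemidirectProduct.mul_right, SemidirectProduct.inv_right, toAdd_mul, toAdd_inv,
    dihedralAut_toAdd, map_mul, toAdd_ofAdd, Int.units_inv_eq_self]
  rcases Int.units_eq_one_or g.right with h | h <;> rcases Int.units_eq_one_or ε with h2 | h2 <;>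
    simp only [h, h2, Units.val_one, Units.val_neg, one_mul, neg_mul, mul_one, neg_neg,
      mul_neg, MulAut.mul_apply, dihedralAut_toAdd] <;> ring_nf <;>
    (constructor <;> intro hd <;> · have h3 := Int.dvd_neg.mpr hd; convert h3 using 2 <;> ring)

open Multiplicative in
lemma leftRel_dvd (m : ℕ) (a b : DInf) :
    a⁻¹ * b ∈ DihedralSub m ↔ (m : ℤ) ∣ toAdd b.left - toAdd a.left := by
  rw [mem_dihedralSub_iff]
  simp only [SemidirectProduct.mul_left, SemidirectProduct.inv_left,
    SemidirectProduct.inv_right, toAdd_mul, toAdd_inv,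
    dihedralAut_toAdd, Int.units_inv_eq_self]
  rcases Int.units_eq_one_or a.right with h | h <;>
    simp only [h, Units.val_one, Units.val_neg, one_mul, neg_mul, mul_one, neg_neg, mul_neg] <;>
    (constructor <;> (intro hd; rcases hd with ⟨t, ht⟩; first | exact ⟨t, by linarith⟩ | exact ⟨-t, by linarith⟩))

open Multiplicative in
noncomputable def toZMod (m : ℕ) : DInf ⧸ DihedralSub m → ZMod m :=
  Quotient.lift (fun g : DInf => ((toAdd g.left : ℤ) : ZMod m)) (by
    intro a b hab
    have hab2 := (leftRel_dvd m a b).mp (QuotientGroup.leftRel_apply.mp hab)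
    exact (ZMod.intCast_eq_intCast_iff_dvd_sub _ _ _).mpr hab2)

open Multiplicative in
lemma toZMod_mk (m : ℕ) (g : DInf) :
    toZMod m (QuotientGroup.mk g) = ((toAdd g.left : ℤ) : ZMod m) := rfl

open Multiplicative in
lemma toZMod_bijective (m : ℕ) : Function.Bijective (toZMod m) := by
  constructor
  · intro a b
    induction a using Quotient.inductionOn with | h a =>
    induction b using Quotient.inductionOn with | h b =>
    intro hab
    have : toZMod m (QuotientGroup.mk a) = toZMod m (QuotientGroup.mk b) := hab
    rw [toZMod_mk, toZMod_mk, ZMod.intCast_eq_intCast_iff_dvd_sub] at this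
    exact (QuotientGroup.eq).mpr ((leftRel_dvd m a b).mpr this)
  · intro x
    obtain ⟨z, rfl⟩ := ZMod.intCast_surjective x
    exact ⟨QuotientGroup.mk ⟨Multiplicative.ofAdd z, 1⟩, rfl⟩

lemma solvable_iff (m : ℕ) (k : ℤ) :
    (∃ x : ZMod m, 2 * x = (k : ZMod m)) ↔ ((Nat.gcd 2 m : ℤ)) ∣ k := by
  constructor
  · rintro ⟨x, hx⟩
    obtain ⟨z, rfl⟩ := ZMod.intCast_surjective x
    have : ((2 * z : ℤ) : ZMod m) = (k : ZMod m) := by push_cast; exact hx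
    rw [ZMod.intCast_eq_intCast_iff_dvd_sub] at this
    obtain ⟨t, ht⟩ := this
    have h2 : ((Nat.gcd 2 m : ℤ)) ∣ 2 := Int.natCast_dvd_natCast.mpr (Nat.gcd_dvd_left 2 m)
    have hm : ((Nat.gcd 2 m : ℤ)) ∣ (m : ℤ) := Int.natCast_dvd_natCast.mpr (Nat.gcd_dvd_right 2 m)
    have : k = 2 * z + m * t := by linarith
    rw [this]
    exact dvd_add (h2.mul_right z) (hm.mul_right t)
  · rintro ⟨t, ht⟩
    have hg : (Nat.gcd 2 m : ℤ) = Int.gcd 2 m := by simp [Int.gcd]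
    have hb := Int.gcd_eq_gcd_ab 2 (m : ℤ)
    refine ⟨((Int.gcdA 2 m) * t : ℤ), ?_⟩
    have : (k : ℤ) = 2 * (Int.gcdA 2 m * t) + (m : ℤ) * (Int.gcdB 2 m * t) := by
      rw [ht, hg, hb]; ring
    rw [this]
    push_cast
    simp [ZMod.natCast_self]

lemma ker_card (m : ℕ) (hm : 0 < m) :
    Nat.card {x : ZMod m // 2 * x = 0} = Nat.gcd 2 m := by
  haveI : NeZero m := ⟨hm.ne'⟩
  set f : ZMod m →+ ZMod m := AddMonoidHom.mulLeft (2 : ZMod m) with hf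
  have hker : ∀ x, x ∈ f.ker ↔ 2 * x = 0 := fun x => Iff.rfl
  have hrange : f.range = AddSubgroup.zmultiples (2 : ZMod m) := by
    ext x
    constructor
    · rintro ⟨y, rfl⟩
      obtain ⟨z, rfl⟩ := ZMod.intCast_surjective y
      exact ⟨z, by simp [hf, AddMonoidHom.mulLeft, zsmul_eq_mul, mul_comm]⟩
    · rintro ⟨z, rfl⟩
      exact ⟨(z : ZMod m), by simp [hf, AddMonoidHom.mulLeft, zsmul_eq_mul, mul_comm]⟩
  have hcr : Nat.card f.range = m / Nat.gcd m 2 := by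
    rw [hrange, Nat.card_zmultiples]
    have : (2 : ZMod m) = ((2 : ℕ) : ZMod m) := by push_cast; ring
    rw [this, ZMod.addOrderOf_coe 2 hm.ne']
  have hlag : Nat.card (ZMod m) = Nat.card f.range * Nat.card f.ker := by
    rw [← Nat.card_congr (QuotientAddGroup.quotientKerEquivRange f).toEquiv]
    exact (AddSubgroup.card_eq_card_quotient_mul_card_addSubgroup f.ker)
  have hzm : Nat.card (ZMod m) = m := Nat.card_zmod m
  have hdvd : Nat.gcd m 2 ∣ m := Nat.gcd_dvd_left m 2
  have hgpos : 0 < Nat.gcd m 2 := Nat.gcd_pos_of_pos_left 2 hm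
  have h1 := hlag
  rw [hcr, hzm] at h1
  have h2 : 0 < m / Nat.gcd m 2 := Nat.div_pos (Nat.le_of_dvd hm hdvd) hgpos
  have h4 : m / Nat.gcd m 2 * Nat.card f.ker = m / Nat.gcd m 2 * Nat.gcd m 2 := by
    rw [← h1, Nat.div_mul_cancel hdvd]
  have hcardker : Nat.card f.ker = Nat.gcd m 2 := Nat.eq_of_mul_eq_mul_left h2 h4
  calc Nat.card {x : ZMod m // 2 * x = 0}
      = Nat.card f.ker := Nat.card_congr (Equiv.subtypeEquivRight (fun x => (hker x).symm))
    _ = Nat.gcd 2 m := by rw [hcardker, Nat.gcd_comm]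

lemma fiber_card (m : ℕ) (hm : 0 < m) (k : ℤ) :
    Nat.card {x : ZMod m // 2 * x = (k : ZMod m)} =
      if ((Nat.gcd 2 m : ℤ)) ∣ k then Nat.gcd 2 m else 0 := by
  by_cases h : ((Nat.gcd 2 m : ℤ)) ∣ k
  · obtain ⟨x₀, hx₀⟩ := (solvable_iff m k).mpr h
    rw [if_pos h, ← ker_card m hm]
    exact Nat.card_congr
      ⟨fun p => ⟨p.1 - x₀, by have hx := p.2; simp [mul_sub, hx, hx₀]⟩,
       fun p => ⟨p.1 + x₀, by have hx := p.2; simp [mul_add, hx, hx₀]⟩,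
       fun p => by simp, fun p => by simp⟩
  · rw [if_neg h]
    haveI : IsEmpty {x : ZMod m // 2 * x = (k : ZMod m)} :=
      ⟨fun p => h ((solvable_iff m k).mp ⟨p.1, p.2⟩)⟩
    exact Nat.card_of_isEmpty

lemma count_eq (m : ℕ) (hm : 0 < m) (k : ℤ) (ε : ℤˣ) :
    Nat.card {c : DInf ⧸ DihedralSub m //
        (Quotient.out c)⁻¹ * (⟨Multiplicative.ofAdd k, ε⟩ : DInf) * Quotient.out c
          ∈ DihedralSub m}
      = if ε = 1 ∧ (m : ℤ) ∣ k then m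
        else if ε = -1 ∧ ((Nat.gcd 2 m : ℤ)) ∣ k then Nat.gcd 2 m
        else 0 := by
  haveI : NeZero m := ⟨hm.ne'⟩
  set e := Equiv.ofBijective _ (toZMod_bijective m) with he
  have hcond : ∀ c : DInf ⧸ DihedralSub m,
      ((Quotient.out c)⁻¹ * (⟨Multiplicative.ofAdd k, ε⟩ : DInf) * Quotient.out c
          ∈ DihedralSub m)
        ↔ (k : ZMod m) + (((ε : ℤ) - 1 : ℤ) : ZMod m) * toZMod m c = 0 := by
    intro c
    rw [conj_mem_iff]
    have hout : toZMod m c =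
        ((Multiplicative.toAdd (Quotient.out c).left : ℤ) : ZMod m) := by
      conv_lhs => rw [← Quotient.out_eq c]
      rfl
    rw [hout, ← ZMod.intCast_zmod_eq_zero_iff_dvd]
    push_cast
    exact Iff.rfl
  have hcard : Nat.card {c : DInf ⧸ DihedralSub m //
        (Quotient.out c)⁻¹ * (⟨Multiplicative.ofAdd k, ε⟩ : DInf) * Quotient.out c
          ∈ DihedralSub m}
      = Nat.card {x : ZMod m // (k : ZMod m) + (((ε : ℤ) - 1 : ℤ) : ZMod m) * x = 0} := by
    refine Nat.card_congr (Equiv.subtypeEquiv e (fun c => ?_))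
    rw [hcond c]
    rfl
  rw [hcard]
  rcases Int.units_eq_one_or ε with h1 | h1
  · subst h1
    simp only [Units.val_one, sub_self, Int.cast_zero, zero_mul, add_zero, true_and]
    by_cases hk : (m : ℤ) ∣ k
    · rw [if_pos hk]
      have : ∀ x : ZMod m, (k : ZMod m) = 0 := fun _ =>
        (ZMod.intCast_zmod_eq_zero_iff_dvd k m).mpr hk
      calc Nat.card {x : ZMod m // (k : ZMod m) = 0}
          = Nat.card (ZMod m) :=
            Nat.card_congr (Equiv.subtypeUnivEquiv (fun x => this x))
        _ = m := Nat.card_zmod m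
    · rw [if_neg hk, if_neg (by simp)]
      haveI : IsEmpty {x : ZMod m // (k : ZMod m) = 0} :=
        ⟨fun p => hk ((ZMod.intCast_zmod_eq_zero_iff_dvd k m).mp p.2)⟩
      exact Nat.card_of_isEmpty
  · subst h1
    rw [if_neg (by simp)]
    have hiff : ∀ x : ZMod m,
        ((k : ZMod m) + ((((-1 : ℤˣ) : ℤ) - 1 : ℤ) : ZMod m) * x = 0) ↔
          2 * x = (k : ZMod m) := by
      intro x
      push_cast
      constructor <;> intro h <;> linear_combination -h
    rw [Nat.card_congr (Equiv.subtypeEquivRight hiff), fiber_card m hm k]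
    simp

theorem stmt19 :
    (∀ (m : ℕ), 0 < m → ∀ (k : ℤ) (ε : ℤˣ),
      Nat.card {c : DInf ⧸ DihedralSub m //
          (Quotient.out c)⁻¹ * (⟨Multiplicative.ofAdd k, ε⟩ : DInf) * Quotient.out c
            ∈ DihedralSub m}
        = if ε = 1 ∧ (m : ℤ) ∣ k then m
          else if ε = -1 ∧ ((Nat.gcd 2 m : ℤ)) ∣ k then Nat.gcd 2 m
          else 0) ∧
    (∀ (k : ℤ) (ε : ℤˣ),
      Filter.Tendsto
        (fun m : ℕ =>
          (Nat.card {c : DInf ⧸ DihedralSub m //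
              (Quotient.out c)⁻¹ * (⟨Multiplicative.ofAdd k, ε⟩ : DInf) * Quotient.out c
                ∈ DihedralSub m} : ℝ) / m)
        Filter.atTop
        (nhds (if k = 0 ∧ ε = 1 then 1 else 0))) := by
  constructor
  · exact fun m hm k ε => count_eq m hm k ε
  · intro k ε
    rcases Int.units_eq_one_or ε with h1 | h1
    · subst h1
      by_cases hk : k = 0
      · subst hk
        rw [if_pos ⟨rfl, rfl⟩]
        apply Filter.Tendsto.congr' _ tendsto_const_nhds
        filter_upwards [Filter.eventually_ge_atTop 1] with m hm
        rw [count_eq m hm 0 1, if_pos ⟨rfl, dvd_zero _⟩]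
        field_simp
      · rw [if_neg (by simp [hk])]
        apply Filter.Tendsto.congr' _ tendsto_const_nhds
        filter_upwards [Filter.eventually_gt_atTop k.natAbs] with m hm
        have hm0 : 0 < m := lt_of_le_of_lt (Nat.zero_le _) hm
        have hnd : ¬ (m : ℤ) ∣ k := by
          intro hd
          have h2 : (m : ℤ) ∣ (k.natAbs : ℤ) := Int.dvd_natAbs.mpr hd
          have h3 : (m : ℤ) ≤ (k.natAbs : ℤ) := Int.le_of_dvd (by omega) h2
          omega
        rw [count_eq m hm0 k 1, if_neg (by simp [hnd]), if_neg (by simp)]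
        simp
    · subst h1
      rw [if_neg (by simp)]
      apply squeeze_zero' (g := fun m : ℕ => (2 : ℝ) / m)
      · filter_upwards with m
        positivity
      · filter_upwards [Filter.eventually_ge_atTop 1] with m hm
        have hm0 : 0 < m := hm
        rw [count_eq m hm0 k (-1), if_neg (by simp)]
        have hg : Nat.gcd 2 m ≤ 2 := Nat.gcd_le_left m (by norm_num)
        by_cases hd : ((Nat.gcd 2 m : ℤ)) ∣ k
        · rw [if_pos (by simp [hd])]
          gcongr
          exact_mod_cast hg
        · rw [if_neg (by simp [hd])]
          simp
          positivity
      · exact tendsto_const_div_atTop_nhds_zero_nat 2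
end
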